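/- arXiv:1405.0072 — 4 statements merged into one kernel-verified Lean document; each statement's English description precedes it below -/
import Mathlib

section
/- Fix an integer n ≥ 1 and nonnegative integers k_0, k_1, …, k_n, and define P_q(k_0, …, k_n) = ∏_{m=1}^{n} [k_{m−1} + k_m − 1 choose k_m]_q, with the convention that a factor with k_{m−1} = k_m = 0 equals 1 and that a Gaussian binomial with lower entry exceeding the upper entry is 0. Then for every integer τ_0 with 0 ≤ τ_0 ≤ k_0, one has the polynomial identity P_q(k_0, …, k_n) = Σ over all tuples (τ_1, …, τ_n) with 0 ≤ τ_i ≤ k_i of P_q(τ_0, τ_1, …, τ_n) · P_q(k_0 − τ_0, k_1 − τ_1, …, k_n − τ_n) · q^{Σ_{i=0}^{n−1} τ_i (k_{i+1} − τ_{i+1})}. -/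
open Polynomial

/-- A partition: a weakly decreasing, finitely supported sequence of naturals;
`parts i` is the `(i+1)`-st part `λ_{i+1}`. -/
structure YPartition where
  parts : ℕ → ℕ
  antitone : ∀ ⦃i j : ℕ⦄, i ≤ j → parts j ≤ parts i
  finite_support : (Function.support parts).Finite

namespace YPartition

/-- Cells, 0-indexed: `(i, j)` is the cell in row `i+1`, column `j+1`. -/
def cells (μ : YPartition) : Set (ℕ × ℕ) := {c | c.2 < μ.parts c.1}

/-- The size `|μ|` of a partition: the number of cells of its Young diagram. -/
noncomputable def size (μ : YPartition) : ℕ := μ.cells.ncard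

/-- The arm length of a cell: the number of cells in its row strictly to its right. -/
def arm (μ : YPartition) (c : ℕ × ℕ) : ℕ := μ.parts c.1 - (c.2 + 1)

/-- The leg length of a cell: the number of cells in its column strictly below it. -/
noncomputable def leg (μ : YPartition) (c : ℕ × ℕ) : ℕ :=
  {r : ℕ | c.1 < r ∧ c.2 < μ.parts r}.ncard

/-- The number of nonzero parts. -/
noncomputable def numParts (μ : YPartition) : ℕ := {i : ℕ | μ.parts i ≠ 0}.ncard

end YPartition

/-- The Gaussian binomial coefficient `[n choose k]_t`, a polynomial in `t` with
natural number coefficients (`0` when `k > n`). -/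
noncomputable def gaussBinom : ℕ → ℕ → Polynomial ℕ
  | _, 0 => 1
  | 0, _ + 1 => 0
  | n + 1, k + 1 => gaussBinom n k + X ^ (k + 1) * gaussBinom n (k + 1)
  termination_by a _ => a

/-- The Gaussian binomial coefficient with integer entries: `0` if `b < 0` or `b > a`. -/
noncomputable def gbinomZ (a b : ℤ) : Polynomial ℕ :=
  if 0 ≤ b ∧ b ≤ a then gaussBinom a.toNat b.toNat else 0

lemma gaussBinom_zero_right (n : ℕ) : gaussBinom n 0 = 1 := by
  cases n <;> rw [gaussBinom]

lemma gaussBinom_eq_zero {n k : ℕ} (h : n < k) : gaussBinom n k = 0 := by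
  induction n generalizing k with
  | zero => obtain ⟨k, rfl⟩ := Nat.exists_eq_add_of_lt h; rw [gaussBinom]
  | succ n ih =>
      obtain ⟨k, rfl⟩ : ∃ m, k = m + 1 := ⟨k - 1, by omega⟩
      rw [gaussBinom, ih (by omega), ih (by omega)]
      simp

/-- `F a b`: the basic factor. -/
noncomputable def Fc (a b : ℕ) : Polynomial ℕ :=
  if a = 0 ∧ b = 0 then 1 else gbinomZ ((a : ℤ) + b - 1) b

lemma Fc_eq (a b : ℕ) (ha : 1 ≤ a) : Fc a b = gaussBinom (a + b - 1) b := by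
  have h1 : ((a : ℤ) + b - 1).toNat = a + b - 1 := by omega
  have h2 : ((b : ℤ)).toNat = b := rfl
  rw [Fc, if_neg (by omega), gbinomZ, if_pos ⟨Int.ofNat_nonneg b, by omega⟩, h1, h2]

lemma Fc_zero_right (a : ℕ) : Fc a 0 = 1 := by
  rcases Nat.eq_zero_or_pos a with h | h
  · simp [Fc, h]
  · rw [Fc_eq a 0 h, gaussBinom_zero_right]

lemma Fc_zero_left {b : ℕ} (hb : 1 ≤ b) : Fc 0 b = 0 := by
  rw [Fc, if_neg (by omega), gbinomZ, if_neg (by push_cast; omega)]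

lemma Fc_grid (a b : ℕ) (ha : 1 ≤ a) :
    Fc a (b + 1) = Fc a b + X ^ (b + 1) * Fc (a - 1) (b + 1) := by
  obtain ⟨c, rfl⟩ : ∃ m, a = m + 1 := ⟨a - 1, by omega⟩
  have hA : Fc (c + 1) (b + 1) = gaussBinom (c + b + 1) (b + 1) := by
    rw [Fc_eq _ _ ha]; congr 1; omega
  have hB : Fc (c + 1) b = gaussBinom (c + b) b := by
    rw [Fc_eq _ _ ha]; congr 1; omega
  have hC : Fc (c + 1 - 1) (b + 1) = gaussBinom (c + b) (b + 1) := by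
    rw [Nat.add_sub_cancel]
    rcases Nat.eq_zero_or_pos c with rfl | hpos
    · rw [Fc_zero_left (by omega)]
      exact (gaussBinom_eq_zero (by omega)).symm
    · rw [Fc_eq _ _ hpos]; congr 1
  rw [hA, hB, hC, gaussBinom]

lemma Fc_key (a : ℕ) (ha : 1 ≤ a) (b : ℕ) :
    Fc a b = ∑ j ∈ Finset.range (b + 1), Fc (a - 1) j * X ^ j := by
  induction b with
  | zero => simp [Fc_zero_right]
  | succ b ih =>
      rw [Finset.sum_range_succ, ← ih, Fc_grid a b ha, mul_comm]

lemma Fc_split (s : ℕ) : ∀ a b : ℕ, s ≤ a →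
    Fc a b = ∑ t ∈ Finset.range (b + 1),
      Fc s t * Fc (a - s) (b - t) * X ^ (s * (b - t)) := by
  induction s with
  | zero =>
      intro a b _
      rw [Finset.sum_eq_single_of_mem 0 (Finset.mem_range.2 (by omega))]
      · simp [Fc, Fc_zero_right]
      · intro t _ ht
        rw [Fc_zero_left (by omega)]
        simp
  | succ s ih =>
      intro a b hs
      have ha : 1 ≤ a := by omega
      rw [Fc_key a ha b]
      have hIH : ∀ j, Fc (a - 1) j = ∑ t ∈ Finset.range (j + 1),
          Fc s t * Fc (a - 1 - s) (j - t) * X ^ (s * (j - t)) :=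
        fun j => ih (a - 1) j (by omega)
      calc (∑ j ∈ Finset.range (b + 1), Fc (a - 1) j * X ^ j)
          = ∑ j ∈ Finset.range (b + 1), ∑ t ∈ Finset.range (j + 1),
              Fc s t * Fc (a - 1 - s) (j - t) * X ^ (s * (j - t) + j) := by
            refine Finset.sum_congr rfl fun j _ => ?_
            rw [hIH j, Finset.sum_mul]
            refine Finset.sum_congr rfl fun t _ => ?_
            rw [pow_add]; ring
        _ = ∑ v ∈ Finset.range (b + 1), ∑ w ∈ Finset.range (v + 1),
              Fc s w * Fc (a - 1 - s) (b - v) * X ^ (w + (s + 1) * (b - v)) := by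
            rw [Finset.sum_sigma' (Finset.range (b+1)) (fun j => Finset.range (j+1)),
                Finset.sum_sigma' (Finset.range (b+1)) (fun v => Finset.range (v+1))]
            refine Finset.sum_nbij' (fun p => ⟨b - p.1 + p.2, p.2⟩)
              (fun p => ⟨b - p.1 + p.2, p.2⟩) ?_ ?_ ?_ ?_ ?_
            · rintro ⟨j, t⟩ hm
              simp only [Finset.mem_sigma, Finset.mem_range] at hm ⊢
              omega
            · rintro ⟨v, w⟩ hm
              simp only [Finset.mem_sigma, Finset.mem_range] at hm ⊢
              omega
            · rintro ⟨j, t⟩ hm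
              simp only [Finset.mem_sigma, Finset.mem_range] at hm
              have h : b - (b - j + t) + t = j := by omega
              simp [h]
            · rintro ⟨v, w⟩ hm
              simp only [Finset.mem_sigma, Finset.mem_range] at hm
              have h : b - (b - v + w) + w = v := by omega
              simp [h]
            · rintro ⟨j, t⟩ hm
              simp only [Finset.mem_sigma, Finset.mem_range] at hm
              have h1 : b - (b - j + t) = j - t := by omega
              have h2 : t + (s + 1) * (j - t) = s * (j - t) + j := by
                have : (s + 1) * (j - t) = s * (j - t) + (j - t) := by ring
                omega
              simp only [h1, h2]
        _ = ∑ v ∈ Finset.range (b + 1),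
              Fc (s + 1) v * Fc (a - (s + 1)) (b - v) * X ^ ((s + 1) * (b - v)) := by
            refine Finset.sum_congr rfl fun v _ => ?_
            rw [Fc_key (s + 1) (by omega) v, Nat.add_sub_cancel, Finset.sum_mul, Finset.sum_mul]
            refine Finset.sum_congr rfl fun w _ => ?_
            have : a - 1 - s = a - (s + 1) := by omega
            rw [this, pow_add]
            ring

/-- `P_q(k_0, …, k_n) = ∏_{m=1}^{n} [k_{m-1} + k_m - 1 choose k_m]_q`, where a factor
with `k_{m-1} = k_m = 0` equals `1`. -/
noncomputable def Pq (n : ℕ) (k : ℕ → ℕ) : Polynomial ℕ :=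
  ∏ m ∈ Finset.Icc 1 n,
    (if k (m - 1) = 0 ∧ k m = 0 then 1
      else gbinomZ ((k (m - 1) : ℤ) + k m - 1) (k m))

lemma Pq_eq (n : ℕ) (k : ℕ → ℕ) : Pq n k = ∏ m ∈ Finset.Icc 1 n, Fc (k (m - 1)) (k m) := rfl

lemma Pq_congr (n : ℕ) {k k' : ℕ → ℕ} (h : ∀ i, i ≤ n → k i = k' i) : Pq n k = Pq n k' := by
  rw [Pq_eq, Pq_eq]
  refine Finset.prod_congr rfl fun m hm => ?_
  simp only [Finset.mem_Icc] at hm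
  rw [h (m - 1) (by omega), h m (by omega)]

lemma Pq_succ (n : ℕ) (k : ℕ → ℕ) : Pq (n + 1) k = Pq n k * Fc (k n) (k (n + 1)) := by
  rw [Pq_eq, Pq_eq, Finset.prod_Icc_succ_top (by omega)]
  norm_num

/-- The extension of a dependent function on `range (n+1)` by zero. -/
def extFun (n : ℕ) (p : ∀ i ∈ Finset.range (n + 1), ℕ) : ℕ → ℕ :=
  fun i => if h : i ∈ Finset.range (n + 1) then p i h else 0

lemma extFun_inj (n : ℕ) : Function.Injective (extFun n) := by
  intro p p' h
  funext i hi
  have := congrFun h i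
  simp only [extFun] at this
  rw [dif_pos hi, dif_pos hi] at this
  exact this

/-- The finset of admissible tuples. -/
noncomputable def Fs (n : ℕ) (k : ℕ → ℕ) (τ₀ : ℕ) : Finset (ℕ → ℕ) :=
  (((Finset.range (n + 1)).pi (fun i => Finset.range (k i + 1))).map
    ⟨extFun n, extFun_inj n⟩).filter (fun τ => τ 0 = τ₀)

lemma mem_Fs {n : ℕ} {k : ℕ → ℕ} {τ₀ : ℕ} {τ : ℕ → ℕ} :
    τ ∈ Fs n k τ₀ ↔ τ 0 = τ₀ ∧ (∀ i, i ≤ n → τ i ≤ k i) ∧ (∀ i, n < i → τ i = 0) := by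
  simp only [Fs, Finset.mem_filter, Finset.mem_map, Finset.mem_pi,
    Function.Embedding.coeFn_mk]
  constructor
  · rintro ⟨⟨p, hp, rfl⟩, h0⟩
    refine ⟨h0, fun i hi => ?_, fun i hi => ?_⟩
    · have hmem : i ∈ Finset.range (n + 1) := Finset.mem_range.2 (by omega)
      have := hp i hmem
      rw [Finset.mem_range] at this
      simp only [extFun, dif_pos hmem]
      omega
    · simp only [extFun, dif_neg (by simp only [Finset.mem_range]; omega : ¬ i ∈ Finset.range (n+1))]
  · rintro ⟨h0, h1, h2⟩
    refine ⟨⟨fun i _ => τ i, fun i hi => Finset.mem_range.2 ?_, ?_⟩, h0⟩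
    · rw [Finset.mem_range] at hi
      show τ i < k i + 1
      have := h1 i (by omega); omega
    · funext i
      simp only [extFun]
      split
      · rfl
      · next h =>
          rw [Finset.mem_range] at h
          exact (h2 i (by omega)).symm

lemma Fs_zero (k : ℕ → ℕ) (τ₀ : ℕ) (hτ : τ₀ ≤ k 0) :
    Fs 0 k τ₀ = {fun i => if i = 0 then τ₀ else 0} := by
  ext τ
  simp only [mem_Fs, Finset.mem_singleton]
  constructor
  · rintro ⟨h0, h1, h2⟩
    funext i
    by_cases hi : i = 0
    · simp [hi, h0]
    · simp [hi, h2 i (by omega)]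
  · rintro rfl
    refine ⟨rfl, fun i hi => ?_, fun i hi => by simp [show ¬ i = 0 by omega]⟩
    have h : i = 0 := Nat.le_zero.mp hi
    subst h
    simpa using hτ

lemma sum_Fs_succ (n : ℕ) (k : ℕ → ℕ) (τ₀ : ℕ) (f : (ℕ → ℕ) → Polynomial ℕ) :
    ∑ τ ∈ Fs (n + 1) k τ₀, f τ =
      ∑ τ ∈ Fs n k τ₀, ∑ t ∈ Finset.range (k (n + 1) + 1), f (Function.update τ (n + 1) t) := by
  rw [← Finset.sum_product']
  refine Finset.sum_nbij' (fun τ => (Function.update τ (n + 1) 0, τ (n + 1)))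
    (fun p => Function.update p.1 (n + 1) p.2) ?_ ?_ ?_ ?_ ?_
  · intro τ hτ
    obtain ⟨h0, h1, h2⟩ := mem_Fs.mp hτ
    refine Finset.mem_product.mpr ⟨?_, ?_⟩
    · show Function.update τ (n + 1) 0 ∈ Fs n k τ₀
      rw [mem_Fs]
      refine ⟨?_, fun i hi => ?_, fun i hi => ?_⟩
      · rw [Function.update_of_ne (by omega), h0]
      · rw [Function.update_of_ne (by omega)]; exact h1 i (by omega)
      · by_cases h : i = n + 1
        · subst h; rw [Function.update_self]
        · rw [Function.update_of_ne h]; exact h2 i (by omega)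
    · show τ (n + 1) ∈ Finset.range (k (n + 1) + 1)
      rw [Finset.mem_range]
      have := h1 (n + 1) le_rfl; omega
  · rintro ⟨τ, t⟩ hp
    rw [Finset.mem_product] at hp
    obtain ⟨h0, h1, h2⟩ := mem_Fs.mp hp.1
    have ht := Finset.mem_range.mp hp.2
    dsimp only at h0 h1 h2 ht ⊢
    rw [mem_Fs]
    refine ⟨?_, fun i hi => ?_, fun i hi => ?_⟩
    · rw [Function.update_of_ne (by omega), h0]
    · by_cases h : i = n + 1
      · subst h; rw [Function.update_self]; omega
      · rw [Function.update_of_ne h]; exact h1 i (by omega)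
    · rw [Function.update_of_ne (by omega)]; exact h2 i (by omega)
  · intro τ hτ
    simp only [Function.update_idem, Function.update_eq_self]
  · rintro ⟨τ, t⟩ hp
    rw [Finset.mem_product] at hp
    obtain ⟨h0, h1, h2⟩ := mem_Fs.mp hp.1
    have hτn : τ (n + 1) = 0 := h2 (n + 1) (by omega)
    dsimp only
    simp only [Function.update_self, Function.update_idem]
    rw [← hτn, Function.update_eq_self]
  · intro τ hτ
    simp only [Function.update_idem, Function.update_eq_self]

lemma step1 (n : ℕ) (τ : ℕ → ℕ) (t : ℕ) :
    Pq (n + 1) (Function.update τ (n + 1) t) = Pq n τ * Fc (τ n) t := by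
  rw [Pq_succ]
  congr 1
  · exact Pq_congr n fun i hi => Function.update_of_ne (by omega) _ _
  · rw [Function.update_of_ne (by omega), Function.update_self]

lemma step2 (n : ℕ) (k τ : ℕ → ℕ) (t : ℕ) :
    Pq (n + 1) (fun i => k i - Function.update τ (n + 1) t i) =
      Pq n (fun i => k i - τ i) * Fc (k n - τ n) (k (n + 1) - t) := by
  rw [Pq_succ]
  congr 1
  · exact Pq_congr n fun i hi => by rw [Function.update_of_ne (by omega)]
  · rw [Function.update_of_ne (by omega), Function.update_self]

lemma step3 (n : ℕ) (k τ : ℕ → ℕ) (t : ℕ) :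
    (∑ i ∈ Finset.range (n + 1),
        Function.update τ (n + 1) t i * (k (i + 1) - Function.update τ (n + 1) t (i + 1))) =
      (∑ i ∈ Finset.range n, τ i * (k (i + 1) - τ (i + 1))) + τ n * (k (n + 1) - t) := by
  rw [Finset.sum_range_succ]
  congr 1
  · refine Finset.sum_congr rfl fun i hi => ?_
    rw [Finset.mem_range] at hi
    rw [Function.update_of_ne (by omega), Function.update_of_ne (by omega)]
  · rw [Function.update_of_ne (by omega), Function.update_self]

lemma aux_main : ∀ n : ℕ, ∀ k : ℕ → ℕ, ∀ τ₀ : ℕ, τ₀ ≤ k 0 →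
    Pq n k = ∑ τ ∈ Fs n k τ₀,
      Pq n τ * Pq n (fun i => k i - τ i) *
        X ^ (∑ i ∈ Finset.range n, τ i * (k (i + 1) - τ (i + 1))) := by
  intro n
  induction n with
  | zero =>
      intro k τ₀ hτ
      have h0 : ∀ g : ℕ → ℕ, Pq 0 g = 1 := fun g => by
        rw [Pq_eq, Finset.Icc_eq_empty (by omega), Finset.prod_empty]
      rw [Fs_zero k τ₀ hτ, Finset.sum_singleton, h0, h0, h0]
      simp
  | succ n ih =>
      intro k τ₀ hτ
      rw [Pq_succ, ih k τ₀ hτ, Finset.sum_mul, sum_Fs_succ]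
      refine Finset.sum_congr rfl fun τ hτm => ?_
      obtain ⟨h0, h1, h2⟩ := mem_Fs.mp hτm
      rw [Fc_split (τ n) (k n) (k (n + 1)) (h1 n le_rfl), Finset.mul_sum]
      refine Finset.sum_congr rfl fun t ht => ?_
      rw [step1, step2, step3, pow_add]
      ring

theorem statement9 (n : ℕ) (hn : 1 ≤ n) (k : ℕ → ℕ) (τ₀ : ℕ) (hτ : τ₀ ≤ k 0) :
    Pq n k =
      ∑ᶠ (τ : ℕ → ℕ)
        (_ : τ 0 = τ₀ ∧ (∀ i, 1 ≤ i → i ≤ n → τ i ≤ k i) ∧ (∀ i, n < i → τ i = 0)),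
        Pq n τ * Pq n (fun i => k i - τ i) *
          X ^ (∑ i ∈ Finset.range n, τ i * (k (i + 1) - τ (i + 1))) := by
  have hset : {τ : ℕ → ℕ | τ 0 = τ₀ ∧ (∀ i, 1 ≤ i → i ≤ n → τ i ≤ k i) ∧
      (∀ i, n < i → τ i = 0)} = ↑(Fs n k τ₀) := by
    ext τ
    simp only [Set.mem_setOf_eq, Finset.mem_coe, mem_Fs]
    constructor
    · rintro ⟨h0, h1, h2⟩
      refine ⟨h0, fun i hi => ?_, h2⟩
      rcases Nat.eq_zero_or_pos i with rfl | hp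
      · omega
      · exact h1 i hp hi
    · rintro ⟨h0, h1, h2⟩
      exact ⟨h0, fun i _ hi => h1 i hi, h2⟩
  have key : (∑ᶠ (τ : ℕ → ℕ)
        (_ : τ 0 = τ₀ ∧ (∀ i, 1 ≤ i → i ≤ n → τ i ≤ k i) ∧ (∀ i, n < i → τ i = 0)),
        Pq n τ * Pq n (fun i => k i - τ i) *
          X ^ (∑ i ∈ Finset.range n, τ i * (k (i + 1) - τ (i + 1)))) =
      ∑ τ ∈ Fs n k τ₀,
        Pq n τ * Pq n (fun i => k i - τ i) *
          X ^ (∑ i ∈ Finset.range n, τ i * (k (i + 1) - τ (i + 1))) := by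
    rw [← finsum_mem_coe_finset, ← hset]
    rfl
  rw [key]
  exact aux_main n k τ₀ hτ
end

section
/- For any partition μ, let d_k(μ) = #{cells (i,j) of μ : i + j = k} for k ≥ 2, and let j(μ) = Σ_{k ≥ 2} (−1)^k d_k(μ) (an integer; the sum is finite). Then the size of the 2-core of μ equals binom(2·j(μ), 2) = j(μ)·(2·j(μ) − 1). -/
open Polynomial

/-- A partition: a weakly decreasing, finitely supported sequence of naturals;
`parts i` is the `(i+1)`-st part `λ_{i+1}`. -/
structure NatSeqPartition where
  parts : ℕ → ℕ
  antitone : ∀ ⦃i j : ℕ⦄, i ≤ j → parts j ≤ parts i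
  finite_support : (Function.support parts).Finite

namespace NatSeqPartition

/-- Cells, 0-indexed: `(i, j)` is the cell in row `i+1`, column `j+1`. -/
def cells (μ : NatSeqPartition) : Set (ℕ × ℕ) := {c | c.2 < μ.parts c.1}

/-- The size `|μ|` of a partition: the number of cells of its Young diagram. -/
noncomputable def size (μ : NatSeqPartition) : ℕ := μ.cells.ncard

/-- The arm length of a cell: the number of cells in its row strictly to its right. -/
def arm (μ : NatSeqPartition) (c : ℕ × ℕ) : ℕ := μ.parts c.1 - (c.2 + 1)

/-- The leg length of a cell: the number of cells in its column strictly below it. -/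
noncomputable def leg (μ : NatSeqPartition) (c : ℕ × ℕ) : ℕ :=
  {r : ℕ | c.1 < r ∧ c.2 < μ.parts r}.ncard

/-- The number of nonzero parts. -/
noncomputable def numParts (μ : NatSeqPartition) : ℕ := {i : ℕ | μ.parts i ≠ 0}.ncard

end NatSeqPartition

/-- The `m`-diagonal pattern: `d_k(μ)` is the number of cells `(i,j)` (1-indexed) of `μ`
with `(m-1)·i + j = k`. -/
noncomputable def mdiag (m : ℕ) (μ : NatSeqPartition) (k : ℕ) : ℕ :=
  {c ∈ μ.cells | (m - 1) * (c.1 + 1) + (c.2 + 1) = k}.ncard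

/-- A single domino removal: either one part decreases by `2`, or two equal consecutive
parts each decrease by `1`. -/
def DominoStep (lam mu : NatSeqPartition) : Prop :=
  (∃ i, lam.parts i = mu.parts i + 2 ∧ ∀ j, j ≠ i → mu.parts j = lam.parts j) ∨
  (∃ i, lam.parts i = lam.parts (i + 1) ∧ lam.parts i = mu.parts i + 1 ∧
    lam.parts (i + 1) = mu.parts (i + 1) + 1 ∧
    ∀ j, j ≠ i → j ≠ i + 1 → mu.parts j = lam.parts j)

/-- `mu` is the 2-core of `lam`: it is obtained from `lam` by repeated domino removals
and admits no further domino removal. -/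
def TwoCoreOf (lam mu : NatSeqPartition) : Prop :=
  Relation.ReflTransGen DominoStep lam mu ∧ ∀ ν, ¬ DominoStep mu ν

/-- `j(μ) = Σ_{k ≥ 2} (-1)^k d_k(μ)`, where `d_k` is the 2-diagonal pattern. -/
noncomputable def jstat (μ : NatSeqPartition) : ℤ :=
  ∑ᶠ k : ℕ, (-1 : ℤ) ^ k * (mdiag 2 μ k : ℤ)
namespace Stmt11Aux
open Finset

/-- Generic formula: if `F` is a finset of cells of `μ`, then
`jstat μ = ∑ c in F, (-1)^(c.1+c.2)`. -/
lemma jstat_eq_sum (μ : NatSeqPartition) (F : Finset (ℕ × ℕ)) (hF : ↑F = μ.cells) :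
    jstat μ = ∑ c ∈ F, (-1 : ℤ) ^ (c.1 + c.2) := by
  have hmd : ∀ k, mdiag 2 μ k = (F.filter (fun c => c.1 + c.2 + 2 = k)).card := by
    intro k
    rw [mdiag]
    have hset : {c ∈ μ.cells | (2 - 1) * (c.1 + 1) + (c.2 + 1) = k}
        = ↑(F.filter (fun c => c.1 + c.2 + 2 = k)) := by
      ext c
      simp only [Set.mem_setOf_eq, Finset.coe_filter, ← hF, Finset.mem_coe]
      constructor
      · rintro ⟨h1, h2⟩; exact ⟨h1, by omega⟩
      · rintro ⟨h1, h2⟩; exact ⟨h1, by omega⟩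
    rw [hset, Set.ncard_coe_finset]
  have hsupp : (Function.support fun k => (-1 : ℤ) ^ k * (mdiag 2 μ k : ℤ)) ⊆
      ↑(F.image (fun c => c.1 + c.2 + 2)) := by
    intro k hk
    simp only [Function.mem_support] at hk
    rw [hmd] at hk
    have hne : (F.filter (fun c => c.1 + c.2 + 2 = k)).Nonempty := by
      by_contra hcon
      rw [Finset.not_nonempty_iff_eq_empty] at hcon
      simp [hcon] at hk
    obtain ⟨c, hc⟩ := hne
    simp only [Finset.mem_filter] at hc
    exact Finset.mem_coe.mpr (Finset.mem_image.mpr ⟨c, hc.1, hc.2⟩)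
  rw [jstat, finsum_eq_sum_of_support_subset _ hsupp]
  rw [← Finset.sum_fiberwise_of_maps_to
    (g := fun c : ℕ × ℕ => c.1 + c.2 + 2) (t := F.image (fun c => c.1 + c.2 + 2))
    (fun c hc => Finset.mem_image_of_mem _ hc) (fun c => (-1 : ℤ) ^ (c.1 + c.2))]
  refine Finset.sum_congr rfl fun k _ => ?_
  rw [hmd]
  rw [Finset.sum_congr rfl (fun c hc => ?_), Finset.sum_const, nsmul_eq_mul, mul_comm]
  have h2 : c.1 + c.2 + 2 = k := (Finset.mem_filter.mp hc).2
  rw [← h2, pow_succ, pow_succ]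
  ring

lemma size_eq (μ : NatSeqPartition) (F : Finset (ℕ × ℕ)) (hF : ↑F = μ.cells) :
    μ.size = F.card := by
  rw [NatSeqPartition.size, ← hF, Set.ncard_coe_finset]

/-- Existence of a bound where parts vanish. -/
lemma exists_bound (μ : NatSeqPartition) : ∃ n, μ.parts n = 0 := by
  obtain ⟨n, hn⟩ := Set.Infinite.exists_notMem_finite (Set.infinite_univ) μ.finite_support
  exact ⟨n, by simpa [Function.mem_support] using hn⟩

/-- A canonical finset of cells. -/
lemma exists_cells_finset (μ : NatSeqPartition) : ∃ F : Finset (ℕ × ℕ), ↑F = μ.cells := by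
  obtain ⟨n, hn⟩ := exists_bound μ
  refine ⟨((Finset.range n) ×ˢ (Finset.range (μ.parts 0))).filter
    (fun c => c.2 < μ.parts c.1), ?_⟩
  ext c
  simp only [Finset.coe_filter, Finset.mem_product, Finset.mem_range, Set.mem_setOf_eq,
    Finset.mem_coe, NatSeqPartition.cells]
  constructor
  · rintro ⟨_, h⟩; exact h
  · intro h
    refine ⟨⟨?_, lt_of_lt_of_le h (μ.antitone (Nat.zero_le _))⟩, h⟩
    by_contra hcon
    push_neg at hcon
    have := μ.antitone hcon
    omega

/-- jstat is invariant under a domino step. -/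
lemma jstat_step {lam mu : NatSeqPartition} (h : DominoStep lam mu) : jstat lam = jstat mu := by
  obtain ⟨F, hF⟩ := exists_cells_finset mu
  rcases h with ⟨i, hi, hrest⟩ | ⟨i, heq, hi1, hi2, hrest⟩
  · -- type 1: row i loses two cells
    set a : ℕ × ℕ := (i, mu.parts i) with ha
    set b : ℕ × ℕ := (i, mu.parts i + 1) with hb
    have hcells : ↑(insert a (insert b F)) = lam.cells := by
      ext ⟨x, y⟩
      simp only [Finset.coe_insert, Set.mem_insert_iff, Finset.mem_coe, ← Finset.mem_coe, hF]
      simp only [NatSeqPartition.cells, Set.mem_setOf_eq, ha, hb, Prod.mk.injEq]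
      by_cases hx : x = i
      · obtain rfl := hx
        omega
      · rw [← hrest x hx]
        omega
    have hbF : b ∉ F := by
      intro hcon
      have : b ∈ mu.cells := by rw [← hF]; exact hcon
      simp only [NatSeqPartition.cells, Set.mem_setOf_eq, hb] at this
      omega
    have haF : a ∉ insert b F := by
      intro hcon
      rcases Finset.mem_insert.mp hcon with h' | h'
      · simp [ha, hb] at h'
      · have : a ∈ mu.cells := by rw [← hF]; exact h'
        simp only [NatSeqPartition.cells, Set.mem_setOf_eq, ha] at this
        omega
    rw [jstat_eq_sum lam _ hcells, jstat_eq_sum mu F hF,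
      Finset.sum_insert haF, Finset.sum_insert hbF]
    simp only [ha, hb]
    have hab : (i + (mu.parts i + 1)) = (i + mu.parts i) + 1 := by omega
    rw [hab, pow_succ]
    ring
  · -- type 2: rows i and i+1 each lose one cell
    set a : ℕ × ℕ := (i, mu.parts i) with ha
    set b : ℕ × ℕ := (i + 1, mu.parts i) with hb
    have hpi1 : mu.parts (i + 1) = mu.parts i := by omega
    have hcells : ↑(insert a (insert b F)) = lam.cells := by
      ext ⟨x, y⟩
      simp only [Finset.coe_insert, Set.mem_insert_iff, Finset.mem_coe, ← Finset.mem_coe, hF]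
      simp only [NatSeqPartition.cells, Set.mem_setOf_eq, ha, hb, Prod.mk.injEq]
      by_cases hx : x = i
      · obtain rfl := hx
        omega
      · by_cases hx1 : x = i + 1
        · obtain rfl := hx1
          omega
        · rw [← hrest x hx hx1]
          omega
    have hbF : b ∉ F := by
      intro hcon
      have : b ∈ mu.cells := by rw [← hF]; exact hcon
      simp only [NatSeqPartition.cells, Set.mem_setOf_eq, hb] at this
      omega
    have haF : a ∉ insert b F := by
      intro hcon
      rcases Finset.mem_insert.mp hcon with h' | h'
      · simp [ha, hb] at h'
      · have : a ∈ mu.cells := by rw [← hF]; exact h'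
        simp only [NatSeqPartition.cells, Set.mem_setOf_eq, ha] at this
        omega
    rw [jstat_eq_sum lam _ hcells, jstat_eq_sum mu F hF,
      Finset.sum_insert haF, Finset.sum_insert hbF]
    simp only [ha, hb]
    have hab : (i + 1 + mu.parts i) = (i + mu.parts i) + 1 := by omega
    rw [hab, pow_succ]
    ring

lemma jstat_rtg {lam mu : NatSeqPartition} (h : Relation.ReflTransGen DominoStep lam mu) :
    jstat lam = jstat mu := by
  induction h with
  | refl => rfl
  | tail _ hstep ih => rw [ih, jstat_step hstep]

end Stmt11Aux
namespace Stmt11Aux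
open Finset

/-- In a 2-core, each nonzero part exceeds the next by exactly one. -/
lemma core_step (ν : NatSeqPartition) (h : ∀ ν', ¬ DominoStep ν ν') (i : ℕ)
    (hi : 1 ≤ ν.parts i) : ν.parts i = ν.parts (i + 1) + 1 := by
  have hle : ν.parts (i + 1) ≤ ν.parts i := ν.antitone (by omega)
  rcases Nat.lt_or_ge (ν.parts (i + 1) + 2) (ν.parts i + 1) with hA | hB
  · -- parts (i+1) + 2 ≤ parts i : type-1 removal possible, contradiction
    exfalso
    have h2 : ν.parts (i + 1) + 2 ≤ ν.parts i := by omega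
    set f : ℕ → ℕ := Function.update ν.parts i (ν.parts i - 2) with hf
    have hfval : ∀ j, f j = if j = i then ν.parts i - 2 else ν.parts j := by
      intro j
      by_cases hj : j = i
      · subst hj; simp [hf, Function.update]
      · simp [hf, Function.update, hj]
    have hanti : Antitone f := by
      apply antitone_nat_of_succ_le
      intro a
      rw [hfval (a + 1), hfval a]
      by_cases hA1 : a + 1 = i
      · rw [if_pos hA1, if_neg (by omega)]
        have h1 : ν.parts (a + 1) ≤ ν.parts a := ν.antitone (by omega)
        rw [hA1] at h1
        omega
      · rw [if_neg hA1]
        by_cases hA2 : a = i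
        · subst hA2
          rw [if_pos rfl]
          omega
        · rw [if_neg hA2]
          exact ν.antitone (by omega)
    have hfin : (Function.support f).Finite := by
      apply Set.Finite.subset (ν.finite_support.union (Set.finite_singleton i))
      intro j hj
      simp only [Function.mem_support] at hj
      rw [hfval j] at hj
      by_cases hji : j = i
      · exact Or.inr hji
      · rw [if_neg hji] at hj
        exact Or.inl hj
    apply h ⟨f, fun a b hab => hanti hab, hfin⟩
    left
    refine ⟨i, ?_, ?_⟩
    · show ν.parts i = f i + 2
      rw [hfval i, if_pos rfl]; omega
    · intro j hj
      show f j = ν.parts j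
      rw [hfval j, if_neg hj]
  · -- parts (i+1) ≥ parts i - 1; rule out equality
    rcases Nat.lt_or_ge (ν.parts (i + 1)) (ν.parts i) with hlt | hge
    · omega
    · -- parts (i+1) = parts i : find the end of the run, type-2 removal, contradiction
      exfalso
      have heq : ν.parts (i + 1) = ν.parts i := by omega
      obtain ⟨n, hn⟩ := exists_bound ν
      have hQn : ν.parts (i + 1 + n) ≠ ν.parts i := by
        have h1 : ν.parts (i + 1 + n) ≤ ν.parts n := ν.antitone (by omega)
        omega
      have hex : ∃ j, ν.parts (i + 1 + j) ≠ ν.parts i := ⟨n, hQn⟩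
      have hQ : ν.parts (i + 1 + Nat.find hex) ≠ ν.parts i := Nat.find_spec hex
      set j0 := Nat.find hex with hj0
      have hj0pos : 1 ≤ j0 := by
        rcases Nat.eq_zero_or_pos j0 with h0 | h0
        · exfalso
          rw [h0] at hQ
          simp at hQ
          exact hQ heq
        · exact h0
      set J := i + j0 with hJ
      have hJi : i + 1 ≤ J := by omega
      have hpJ : ν.parts J = ν.parts i := by
        have hmin := Nat.find_min hex (m := j0 - 1) (by omega)
        push_neg at hmin
        have harg : i + 1 + (j0 - 1) = J := by omega
        rwa [harg] at hmin
      have hpJ1 : ν.parts (J + 1) ≠ ν.parts i := by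
        have harg : i + 1 + j0 = J + 1 := by omega
        rwa [harg] at hQ
      have hpJ1lt : ν.parts (J + 1) < ν.parts J := by
        have := ν.antitone (show J ≤ J + 1 by omega)
        omega
      have hpJm : ν.parts (J - 1) = ν.parts i := by
        have h1 : ν.parts (J - 1) ≤ ν.parts i := by
          have := ν.antitone (show i ≤ J - 1 by omega)
          omega
        have h2 : ν.parts J ≤ ν.parts (J - 1) := ν.antitone (by omega)
        omega
      set f : ℕ → ℕ := fun j => if j = J - 1 ∨ j = J then ν.parts j - 1 else ν.parts j
        with hf
      have hanti : Antitone f := by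
        apply antitone_nat_of_succ_le
        intro a
        simp only [hf]
        have hgen : ν.parts (a + 1) ≤ ν.parts a := ν.antitone (by omega)
        split_ifs with h1 h2 h2
        · omega
        · omega
        · -- a ∈ {J-1, J}, a+1 ∉ : then a = J (else a = J-1 and a+1 = J ∈)
          have ha : a = J := by
            rcases h2 with h2' | h2'
            · exfalso; apply h1; right; omega
            · exact h2'
          subst ha
          omega
        · omega
      have hfin : (Function.support f).Finite := by
        apply Set.Finite.subset ν.finite_support
        intro j hj
        simp only [Function.mem_support, hf] at hj ⊢
        intro hcon
        apply hj
        split_ifs with h1 <;> omega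
      apply h ⟨f, fun a b hab => hanti hab, hfin⟩
      right
      have hJm1 : J - 1 + 1 = J := by omega
      refine ⟨J - 1, by rw [hJm1, hpJm, hpJ], ?_, ?_, ?_⟩
      · show ν.parts (J - 1) = f (J - 1) + 1
        simp only [hf, if_pos (Or.inl rfl)]
        omega
      · show ν.parts (J - 1 + 1) = f (J - 1 + 1) + 1
        rw [hJm1]
        simp only [hf, if_pos (Or.inr rfl)]
        omega
      · intro j hj1 hj2
        rw [hJm1] at hj2
        show f j = ν.parts j
        have hnot : ¬(j = J - 1 ∨ j = J) := by tauto
        simp only [hf]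
        rw [if_neg hnot]

/-- A 2-core is a staircase. -/
lemma core_parts (ν : NatSeqPartition) (h : ∀ ν', ¬ DominoStep ν ν') (i : ℕ) :
    ν.parts i = ν.parts 0 - i := by
  induction i with
  | zero => simp
  | succ i ih =>
    rcases Nat.eq_zero_or_pos (ν.parts i) with h0 | h0
    · have h1 : ν.parts (i + 1) ≤ ν.parts i := ν.antitone (by omega)
      omega
    · have := core_step ν h i h0
      omega

end Stmt11Aux
namespace Stmt11Aux
open Finset

/-- The staircase cell finset. -/
def stairF (m : ℕ) : Finset (ℕ × ℕ) :=
  ((Finset.range m) ×ˢ (Finset.range m)).filter (fun c => c.1 + c.2 < m)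

lemma mem_stairF {m : ℕ} {c : ℕ × ℕ} : c ∈ stairF m ↔ c.1 + c.2 < m := by
  simp only [stairF, Finset.mem_filter, Finset.mem_product, Finset.mem_range]
  omega

lemma stairF_succ (m : ℕ) :
    stairF (m + 1) = stairF m ∪ (Finset.range (m + 1)).image (fun i => (i, m - i)) := by
  ext ⟨x, y⟩
  simp only [mem_stairF, Finset.mem_union, Finset.mem_image, Finset.mem_range, Prod.mk.injEq]
  constructor
  · intro hxy
    rcases Nat.lt_or_ge (x + y) m with h' | h'
    · exact Or.inl h'
    · exact Or.inr ⟨x, by omega, rfl, by omega⟩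
  · rintro (h' | ⟨a, ha, rfl, rfl⟩) <;> omega

lemma stairF_disj (m : ℕ) :
    Disjoint (stairF m) ((Finset.range (m + 1)).image (fun i => (i, m - i))) := by
  rw [Finset.disjoint_left]
  rintro ⟨x, y⟩ hx hy
  rw [mem_stairF] at hx
  simp only [Finset.mem_image, Finset.mem_range, Prod.mk.injEq] at hy
  obtain ⟨a, ha, rfl, rfl⟩ := hy
  omega

lemma stair_card_succ (m : ℕ) : (stairF (m + 1)).card = (stairF m).card + (m + 1) := by
  rw [stairF_succ, Finset.card_union_of_disjoint (stairF_disj m),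
    Finset.card_image_of_injective _ (fun a b hab => by
      simpa using congrArg Prod.fst hab), Finset.card_range]

lemma stair_sum_succ (m : ℕ) :
    (∑ c ∈ stairF (m + 1), (-1 : ℤ) ^ (c.1 + c.2)) =
      (∑ c ∈ stairF m, (-1 : ℤ) ^ (c.1 + c.2)) + (m + 1) * (-1 : ℤ) ^ m := by
  rw [stairF_succ, Finset.sum_union (stairF_disj m)]
  congr 1
  have h : ∀ a ∈ Finset.range (m + 1),
      (-1 : ℤ) ^ (((a, m - a) : ℕ × ℕ).1 + ((a, m - a) : ℕ × ℕ).2) = (-1 : ℤ) ^ m := by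
    intro a ha
    rw [Finset.mem_range] at ha
    show (-1 : ℤ) ^ (a + (m - a)) = (-1 : ℤ) ^ m
    congr 1
    omega
  refine ((Finset.sum_image (fun a _ b _ hab => by simpa using congrArg Prod.fst hab)).trans
    ?_)
  refine (Finset.sum_congr rfl h).trans ?_
  rw [Finset.sum_const, Finset.card_range, nsmul_eq_mul]
  push_cast
  ring

/-- Main staircase identity. -/
lemma stair_main (m : ℕ) :
    ((stairF m).card : ℤ) =
      (∑ c ∈ stairF m, (-1 : ℤ) ^ (c.1 + c.2)) *
        (2 * (∑ c ∈ stairF m, (-1 : ℤ) ^ (c.1 + c.2)) - 1) ∧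
      (2 * (∑ c ∈ stairF m, (-1 : ℤ) ^ (c.1 + c.2)) = -(m : ℤ) ∨
       2 * (∑ c ∈ stairF m, (-1 : ℤ) ^ (c.1 + c.2)) = (m : ℤ) + 1) := by
  induction m with
  | zero =>
    have : stairF 0 = ∅ := by
      ext c; simp [mem_stairF]
    simp [this]
  | succ m ih =>
    obtain ⟨h1, h2⟩ := ih
    set T : ℤ := ∑ c ∈ stairF m, (-1 : ℤ) ^ (c.1 + c.2) with hT
    rw [stair_sum_succ, stair_card_succ]
    rcases h2 with h2 | h2
    · -- m is even
      have hmev : Even m := by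
        have : (m : ℤ) = -(2 * T) := by omega
        have : Even (m : ℤ) := ⟨-T, by omega⟩
        exact Int.even_coe_nat m |>.mp this
      rw [hmev.neg_one_pow]
      constructor
      · push_cast
        linear_combination h1 - (2 * (m : ℤ) + 2) * h2
      · right
        push_cast
        linear_combination h2
    · -- m is odd
      have hmod : Odd m := by
        have : (m : ℤ) = 2 * T - 1 := by omega
        have : Odd (m : ℤ) := ⟨T - 1, by omega⟩
        exact Int.odd_coe_nat m |>.mp this
      rw [hmod.neg_one_pow]
      constructor
      · push_cast
        linear_combination h1 + (2 * (m : ℤ) + 2) * h2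
      · left
        push_cast
        linear_combination h2

end Stmt11Aux

/-- the 2-core of `μ` has size `binom(2·j(μ), 2) = j(μ)·(2·j(μ) - 1)`. -/
theorem statement11 (μ ν : NatSeqPartition) (h : TwoCoreOf μ ν) :
    (ν.size : ℤ) = jstat μ * (2 * jstat μ - 1) := by
  obtain ⟨hrtg, hcore⟩ := h
  have hj : jstat μ = jstat ν := Stmt11Aux.jstat_rtg hrtg
  set m := ν.parts 0 with hm
  have hparts := Stmt11Aux.core_parts ν hcore
  have hcells : ↑(Stmt11Aux.stairF m) = ν.cells := by
    ext ⟨x, y⟩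
    simp only [Finset.mem_coe, Stmt11Aux.mem_stairF, NatSeqPartition.cells, Set.mem_setOf_eq]
    rw [hparts x]
    omega
  have hsize := Stmt11Aux.size_eq ν _ hcells
  have hjs := Stmt11Aux.jstat_eq_sum ν _ hcells
  obtain ⟨h1, _⟩ := Stmt11Aux.stair_main m
  rw [hsize, hj, hjs, h1]
end

section
/- Fix m ≥ 2 and let λ be a partition with m-quotient (λ^{(0)}, …, λ^{(m−1)}) and m-shift (k_0, …, k_{m−1}). Set s_j = m·k_j + j for 0 ≤ j ≤ m−1, let i_1, …, i_m be the permutation of {0, …, m−1} with s_{i_1} < s_{i_2} < ⋯ < s_{i_m}, and let n = max over pairs i ≠ j of (|λ^{(i)}| + |λ^{(j)}|). If l ∈ {1, …, m} is an index such that |s_{i_l} − s_{i_r}| ≥ m·n for all r ≠ l, then h_{l, m−l}(λ) equals the largest part of λ^{(i_l)}. -/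
open Polynomial

/-- `h_{α,β}`: the number of cells with `α·l_v = β·(a_v + 1)` and
`(α + β) ∣ a_v + l_v + 1`. -/
noncomputable def YPartition.hooks (α β : ℕ) (μ : YPartition) : ℕ :=
  {c ∈ μ.cells | α * μ.leg c = β * (μ.arm c + 1) ∧
    (α + β) ∣ (μ.arm c + μ.leg c + 1)}.ncard

/-- The edge sequence of `μ` takes the value `0` at position `t` iff
`t ∈ {λ_i - i : i ≥ 1}`. -/
def edgeZero (μ : YPartition) (t : ℤ) : Prop :=
  ∃ i : ℕ, (μ.parts i : ℤ) - ((i : ℤ) + 1) = t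

namespace YPartition

/-- the zero position of row i -/
def zpos (μ : YPartition) (i : ℕ) : ℤ := (μ.parts i : ℤ) - ((i : ℤ) + 1)

lemma edgeZero_iff (μ : YPartition) (t : ℤ) : edgeZero μ t ↔ ∃ i, μ.zpos i = t := Iff.rfl

lemma zpos_strictAnti (μ : YPartition) : StrictAnti μ.zpos := by
  intro i j hij
  have h1 : μ.parts j ≤ μ.parts i := μ.antitone hij.le
  have : (j : ℤ) ≥ i + 1 := by exact_mod_cast hij
  simp only [zpos]
  omega

lemma cells_finite (μ : YPartition) : μ.cells.Finite := by
  rcases μ.finite_support.bddAbove with ⟨N, hN⟩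
  apply Set.Finite.subset (Set.finite_Iio (N+1) |>.prod (Set.finite_Iio (μ.parts 0)))
  rintro ⟨i, j⟩ hc
  have hji : j < μ.parts i := hc
  constructor
  · simp only [Set.mem_Iio]
    by_contra h
    push_neg at h
    have : μ.parts i = 0 := by
      by_contra hne
      exact absurd (hN (Function.mem_support.2 hne)) (by omega)
    omega
  · exact lt_of_lt_of_le hji (μ.antitone (Nat.zero_le i))

lemma parts_zero_le_size (μ : YPartition) : μ.parts 0 ≤ μ.size := by
  have h : (fun j => ((0 : ℕ), j)) '' (Set.Iio (μ.parts 0)) ⊆ μ.cells := by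
    rintro ⟨i, j⟩ ⟨j', hj', he⟩
    simp only [Prod.mk.injEq] at he
    obtain ⟨rfl, rfl⟩ := he
    exact hj'
  calc μ.parts 0 = ((fun j => ((0:ℕ), j)) '' (Set.Iio (μ.parts 0))).ncard := by
        rw [Set.ncard_image_of_injective _ (fun a b hab => by simpa using hab)]
        rw [← Finset.coe_Iio, Set.ncard_coe_finset, Nat.card_Iio]
    _ ≤ μ.size := Set.ncard_le_ncard h μ.cells_finite

lemma parts_eq_zero_of_size_le (μ : YPartition) {i : ℕ} (hi : μ.size ≤ i) : μ.parts i = 0 := by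
  by_contra hne
  have h : (fun r => (r, (0 : ℕ))) '' (Set.Iic i) ⊆ μ.cells := by
    rintro ⟨r, j⟩ ⟨r', hr', he⟩
    simp only [Prod.mk.injEq] at he
    obtain ⟨rfl, rfl⟩ := he
    have := μ.antitone (Set.mem_Iic.1 hr')
    simp only [cells, Set.mem_setOf_eq]
    omega
  have hcard : ((fun r => (r, (0:ℕ))) '' (Set.Iic i)).ncard = i + 1 := by
    rw [Set.ncard_image_of_injective _ (fun a b hab => by simpa using hab)]
    rw [← Finset.coe_Iic, Set.ncard_coe_finset, Nat.card_Iic]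
  have := Set.ncard_le_ncard h μ.cells_finite
  rw [hcard] at this
  simp only [size] at hi
  omega

/-- positions below -size are zeros -/
lemma edgeZero_of_lt (μ : YPartition) {t : ℤ} (ht : t < -(μ.size : ℤ)) : edgeZero μ t := by
  refine ⟨(-t - 1).toNat, ?_⟩
  have h1 : (μ.size : ℤ) ≤ -t - 1 := by omega
  have h2 : ((-t - 1).toNat : ℤ) = -t - 1 := Int.toNat_of_nonneg (by omega)
  have h3 : μ.parts (-t - 1).toNat = 0 := μ.parts_eq_zero_of_size_le (by omega)
  rw [h3]
  push_cast
  omega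

/-- positions at or above parts 0 are ones -/
lemma not_edgeZero_of_le (μ : YPartition) {t : ℤ} (ht : (μ.parts 0 : ℤ) ≤ t) : ¬ edgeZero μ t := by
  rintro ⟨i, hi⟩
  have h0 : (μ.parts i : ℤ) ≤ (μ.parts 0 : ℤ) := by exact_mod_cast μ.antitone (Nat.zero_le i)
  have h1 : (0:ℤ) ≤ (i:ℤ) := Int.natCast_nonneg i
  omega

lemma le_of_not_edgeZero (μ : YPartition) {t : ℤ} (ht : ¬ edgeZero μ t) : -(μ.size : ℤ) ≤ t := by
  by_contra h
  exact ht (μ.edgeZero_of_lt (by omega))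

lemma lt_of_edgeZero (μ : YPartition) {t : ℤ} (ht : edgeZero μ t) : t < (μ.size : ℤ) := by
  by_contra h
  have h1 : (μ.parts 0 : ℤ) ≤ (μ.size : ℤ) := by exact_mod_cast μ.parts_zero_le_size
  exact μ.not_edgeZero_of_le (by omega) ht

end YPartition

namespace YPartition

/-- index of first row with part ≤ j -/
noncomputable def Zfun (μ : YPartition) (j : ℕ) : ℕ := sInf {r | μ.parts r ≤ j}

lemma Zfun_set_nonempty (μ : YPartition) (j : ℕ) : {r | μ.parts r ≤ j}.Nonempty :=
  ⟨μ.size, by simp [μ.parts_eq_zero_of_size_le (le_refl _)]⟩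

lemma parts_Zfun_le (μ : YPartition) (j : ℕ) : μ.parts (μ.Zfun j) ≤ j :=
  Nat.sInf_mem (s := {r | μ.parts r ≤ j}) (μ.Zfun_set_nonempty j)

lemma parts_le_of_Zfun_le (μ : YPartition) {j r : ℕ} (h : μ.Zfun j ≤ r) : μ.parts r ≤ j :=
  le_trans (μ.antitone h) (μ.parts_Zfun_le j)

lemma lt_parts_of_lt_Zfun (μ : YPartition) {j r : ℕ} (h : r < μ.Zfun j) : j < μ.parts r := by
  by_contra hc
  have h2 : μ.Zfun j ≤ r := Nat.sInf_le (by simpa using Nat.le_of_not_lt hc)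
  omega

lemma Zfun_antitone (μ : YPartition) {j j' : ℕ} (h : j ≤ j') : μ.Zfun j' ≤ μ.Zfun j :=
  Nat.sInf_le (show μ.parts (μ.Zfun j) ≤ j' from le_trans (μ.parts_Zfun_le j) h)

lemma lt_Zfun_of_mem_cells (μ : YPartition) {c : ℕ × ℕ} (hc : c ∈ μ.cells) :
    c.1 < μ.Zfun c.2 := by
  by_contra h
  exact absurd (μ.parts_le_of_Zfun_le (Nat.le_of_not_lt h)) (by exact Nat.not_le_of_lt hc)

/-- the one-position corresponding to column j -/
noncomputable def tone (μ : YPartition) (j : ℕ) : ℤ := (j : ℤ) - (μ.Zfun j : ℤ)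

lemma tone_strictMono (μ : YPartition) : StrictMono μ.tone := by
  intro j j' h
  have h1 : μ.Zfun j' ≤ μ.Zfun j := μ.Zfun_antitone h.le
  have h2 : (j:ℤ) < (j':ℤ) := by exact_mod_cast h
  have h3 : (μ.Zfun j' : ℤ) ≤ (μ.Zfun j : ℤ) := by exact_mod_cast h1
  simp only [tone]; omega

lemma tone_lt_zpos_iff (μ : YPartition) (j r : ℕ) :
    μ.tone j < μ.zpos r ↔ r < μ.Zfun j := by
  constructor
  · intro h
    by_contra hc
    have h1 : μ.parts r ≤ j := μ.parts_le_of_Zfun_le (Nat.le_of_not_lt hc)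
    have h2 : (μ.parts r : ℤ) ≤ j := by exact_mod_cast h1
    have h3 : (μ.Zfun j : ℤ) ≤ r := by exact_mod_cast Nat.le_of_not_lt hc
    simp only [tone, zpos] at h
    omega
  · intro h
    have h1 : j < μ.parts r := μ.lt_parts_of_lt_Zfun h
    have h2 : (j:ℤ) < (μ.parts r : ℤ) := by exact_mod_cast h1
    have h3 : (r : ℤ) < (μ.Zfun j : ℤ) := by exact_mod_cast h
    simp only [tone, zpos]
    omega

lemma not_edgeZero_tone (μ : YPartition) (j : ℕ) : ¬ edgeZero μ (μ.tone j) := by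
  rintro ⟨r, hr⟩
  rcases lt_or_ge r (μ.Zfun j) with h | h
  · have := (μ.tone_lt_zpos_iff j r).2 h
    rw [show μ.zpos r = μ.tone j from hr] at this
    omega
  · have h1 : μ.parts r ≤ j := μ.parts_le_of_Zfun_le h
    have h2 : (μ.parts r : ℤ) ≤ j := by exact_mod_cast h1
    have h3 : (μ.Zfun j : ℤ) ≤ r := by exact_mod_cast h
    simp only [tone] at hr
    omega

lemma exists_tone_of_not_edgeZero (μ : YPartition) {t' : ℤ} (ht' : ¬ edgeZero μ t') :
    ∃ j : ℕ, μ.tone j = t' := by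
  classical
  -- t' ≥ tone 0
  have hlow : μ.tone 0 ≤ t' := by
    by_contra hc
    push_neg at hc
    apply ht'
    refine ⟨(-t' - 1).toNat, ?_⟩
    have h0 : μ.tone 0 = -(μ.Zfun 0 : ℤ) := by simp [tone]
    rw [h0] at hc
    have h1 : ((-t' - 1).toNat : ℤ) = -t' - 1 := Int.toNat_of_nonneg (by omega)
    have h2 : μ.Zfun 0 ≤ (-t' - 1).toNat := by omega
    have h3 : μ.parts (-t' - 1).toNat = 0 := Nat.le_zero.1 (μ.parts_le_of_Zfun_le h2)
    rw [h3]; push_cast; omega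
  have hex : ∃ j : ℕ, t' < μ.tone (j + 1) := by
    refine ⟨(t' + μ.Zfun 0).toNat, ?_⟩
    set j := (t' + μ.Zfun 0).toNat with hj
    have h1 : (j : ℤ) ≥ t' + μ.Zfun 0 := Int.self_le_toNat _
    have h2 : (μ.Zfun (j+1) : ℤ) ≤ μ.Zfun 0 := by exact_mod_cast μ.Zfun_antitone (Nat.zero_le _)
    simp only [tone]; push_cast; omega
  let j₀ := Nat.find hex
  have hfind : t' < μ.tone (j₀ + 1) := Nat.find_spec hex
  have hle : μ.tone j₀ ≤ t' := by
    rcases Nat.eq_zero_or_pos j₀ with h | h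
    · rw [h]; exact hlow
    · have := Nat.find_min hex (show j₀ - 1 < j₀ by omega)
      push_neg at this
      rwa [Nat.sub_add_cancel h] at this
  rcases eq_or_lt_of_le hle with heq | hlt
  · exact ⟨j₀, heq⟩
  · exfalso
    have ht'j : t' ≤ (j₀ : ℤ) := by
      have : (0:ℤ) ≤ (μ.Zfun (j₀+1) : ℤ) := Int.natCast_nonneg _
      simp only [tone] at hfind; push_cast at hfind; omega
    set s := ((j₀ : ℤ) - t').toNat with hs
    have hsv : (s : ℤ) = (j₀ : ℤ) - t' := Int.toNat_of_nonneg (by omega)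
    have hub : s < μ.Zfun j₀ := by
      simp only [tone] at hlt
      omega
    have hlb : μ.Zfun (j₀ + 1) ≤ s := by
      simp only [tone] at hfind
      push_cast at hfind
      omega
    have h1 : μ.parts s ≤ j₀ + 1 := μ.parts_le_of_Zfun_le hlb
    have h2 : j₀ < μ.parts s := μ.lt_parts_of_lt_Zfun hub
    have h3 : μ.parts s = j₀ + 1 := by omega
    apply ht'
    refine ⟨s, ?_⟩
    rw [h3]; push_cast; omega

end YPartition

namespace YPartition

lemma arm_cast (μ : YPartition) {c : ℕ × ℕ} (hc : c ∈ μ.cells) :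
    (μ.arm c : ℤ) = (μ.parts c.1 : ℤ) - (c.2 : ℤ) - 1 := by
  have h : c.2 < μ.parts c.1 := hc
  simp only [arm]
  omega

lemma leg_set_eq (μ : YPartition) (c : ℕ × ℕ) :
    {r : ℕ | c.1 < r ∧ c.2 < μ.parts r} = Set.Ioo c.1 (μ.Zfun c.2) := by
  ext r
  simp only [Set.mem_setOf_eq, Set.mem_Ioo]
  constructor
  · rintro ⟨h1, h2⟩
    refine ⟨h1, ?_⟩
    by_contra h
    exact absurd (μ.parts_le_of_Zfun_le (Nat.le_of_not_lt h)) (by omega)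
  · rintro ⟨h1, h2⟩
    exact ⟨h1, μ.lt_parts_of_lt_Zfun h2⟩

lemma leg_eq (μ : YPartition) (c : ℕ × ℕ) : μ.leg c = μ.Zfun c.2 - (c.1 + 1) := by
  rw [leg, leg_set_eq, ← Finset.coe_Ioo, Set.ncard_coe_finset, Nat.card_Ioo]
  omega

lemma leg_cast (μ : YPartition) {c : ℕ × ℕ} (hc : c ∈ μ.cells) :
    (μ.leg c : ℤ) = (μ.Zfun c.2 : ℤ) - (c.1 : ℤ) - 1 := by
  have h := μ.lt_Zfun_of_mem_cells hc
  rw [μ.leg_eq c]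
  omega

lemma hook_eq (μ : YPartition) {c : ℕ × ℕ} (hc : c ∈ μ.cells) :
    μ.zpos c.1 - μ.tone c.2 = (μ.arm c : ℤ) + (μ.leg c : ℤ) + 1 := by
  rw [μ.arm_cast hc, μ.leg_cast hc]
  simp only [zpos, tone]
  omega

lemma tone_lt_zpos_of_mem_cells (μ : YPartition) {c : ℕ × ℕ} (hc : c ∈ μ.cells) :
    μ.tone c.2 < μ.zpos c.1 := by
  have h := μ.hook_eq hc
  have h1 : (0:ℤ) ≤ (μ.arm c : ℤ) := Int.natCast_nonneg _
  have h2 : (0:ℤ) ≤ (μ.leg c : ℤ) := Int.natCast_nonneg _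
  omega

/-- number of edge-zeros strictly between t' and t -/
noncomputable def zcount (μ : YPartition) (t' t : ℤ) : ℕ :=
  {u : ℤ | t' < u ∧ u < t ∧ edgeZero μ u}.ncard

lemma zcount_eq_leg (μ : YPartition) {c : ℕ × ℕ} (hc : c ∈ μ.cells) :
    μ.zcount (μ.tone c.2) (μ.zpos c.1) = μ.leg c := by
  have hset : {u : ℤ | μ.tone c.2 < u ∧ u < μ.zpos c.1 ∧ edgeZero μ u} =
      μ.zpos '' (Set.Ioo c.1 (μ.Zfun c.2)) := by
    ext u
    simp only [Set.mem_setOf_eq, Set.mem_image, Set.mem_Ioo]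
    constructor
    · rintro ⟨h1, h2, r, hr0⟩
      have hr : μ.zpos r = u := hr0
      refine ⟨r, ⟨?_, ?_⟩, hr⟩
      · exact (μ.zpos_strictAnti.lt_iff_gt).1 (by rw [hr]; exact h2)
      · exact (μ.tone_lt_zpos_iff c.2 r).1 (by rw [hr]; exact h1)
    · rintro ⟨r, ⟨h1, h2⟩, hr⟩
      exact ⟨by rw [← hr]; exact (μ.tone_lt_zpos_iff c.2 r).2 h2,
        by rw [← hr]; exact μ.zpos_strictAnti h1, ⟨r, hr⟩⟩
  rw [zcount, hset, Set.ncard_image_of_injective _ μ.zpos_strictAnti.injective,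
    ← Finset.coe_Ioo, Set.ncard_coe_finset, Nat.card_Ioo, μ.leg_eq c]
  omega

lemma exists_cell_of_pair (μ : YPartition) {t t' : ℤ} (h : t' < t) (ht : edgeZero μ t)
    (ht' : ¬ edgeZero μ t') :
    ∃ c ∈ μ.cells, μ.zpos c.1 = t ∧ μ.tone c.2 = t' := by
  obtain ⟨i, hi⟩ := ht
  obtain ⟨j, hj⟩ := μ.exists_tone_of_not_edgeZero ht'
  refine ⟨(i, j), ?_, hi, hj⟩
  show j < μ.parts i
  by_contra hc
  have h1 : μ.Zfun j ≤ i := Nat.sInf_le (by simpa using Nat.le_of_not_lt hc)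
  have h2 : (μ.Zfun j : ℤ) ≤ i := by exact_mod_cast h1
  have hzi : (μ.parts i : ℤ) - ((i:ℤ)+1) = t := hi
  have h3 : (j:ℤ) < (μ.parts i : ℤ) := by
    have := μ.tone j
    simp only [tone] at hj
    omega
  exact hc (by exact_mod_cast h3)

end YPartition

/-- the set of pairs encoding the hook cells counted by `hooks` -/
noncomputable def Pset (α β : ℕ) (μ : YPartition) : Set (ℤ × ℤ) :=
  {p | p.2 < p.1 ∧ edgeZero μ p.1 ∧ ¬ edgeZero μ p.2 ∧
    α * μ.zcount p.2 p.1 = β * ((p.1 - p.2).toNat - μ.zcount p.2 p.1) ∧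
    ((α : ℤ) + (β : ℤ)) ∣ (p.1 - p.2)}

lemma hooks_eq_ncard_Pset (α β : ℕ) (μ : YPartition) :
    μ.hooks α β = (Pset α β μ).ncard := by
  classical
  set S := {c ∈ μ.cells | α * μ.leg c = β * (μ.arm c + 1) ∧
    (α + β) ∣ (μ.arm c + μ.leg c + 1)} with hS
  have hinj : Set.InjOn (fun c => (μ.zpos c.1, μ.tone c.2)) S := by
    intro c hc c' hc' he
    simp only [Prod.mk.injEq] at he
    have e1 : c.1 = c'.1 := μ.zpos_strictAnti.injective he.1
    have e2 : c.2 = c'.2 := μ.tone_strictMono.injective he.2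
    exact Prod.ext e1 e2
  have himg : (fun c => (μ.zpos c.1, μ.tone c.2)) '' S = Pset α β μ := by
    ext p
    simp only [Set.mem_image]
    constructor
    · rintro ⟨c, hc, rfl⟩
      obtain ⟨hcc, hcond1, hcond2⟩ := hc
      have hho := μ.hook_eq hcc
      have hlt := μ.tone_lt_zpos_of_mem_cells hcc
      have hzc := μ.zcount_eq_leg hcc
      have htn : (μ.zpos c.1 - μ.tone c.2).toNat = μ.arm c + μ.leg c + 1 := by omega
      refine ⟨hlt, ⟨c.1, rfl⟩, μ.not_edgeZero_tone c.2, ?_, ?_⟩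
      · rw [hzc, htn]
        have : μ.arm c + μ.leg c + 1 - μ.leg c = μ.arm c + 1 := by omega
        rw [this]; exact hcond1
      · have : μ.zpos c.1 - μ.tone c.2 = ((μ.arm c + μ.leg c + 1 : ℕ) : ℤ) := by push_cast; omega
        rw [this]
        exact_mod_cast Int.natCast_dvd_natCast.2 hcond2
    · rintro ⟨hlt, hz, hnz, hcond1, hcond2⟩
      obtain ⟨c, hcc, hc1, hc2⟩ := μ.exists_cell_of_pair hlt hz hnz
      refine ⟨c, ?_, by rw [hc1, hc2]⟩
      have hho := μ.hook_eq hcc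
      have hzc := μ.zcount_eq_leg hcc
      rw [← hc1, ← hc2] at hcond1 hcond2 hlt
      have htn : (μ.zpos c.1 - μ.tone c.2).toNat = μ.arm c + μ.leg c + 1 := by omega
      refine ⟨hcc, ?_, ?_⟩
      · rw [hzc, htn] at hcond1
        have : μ.arm c + μ.leg c + 1 - μ.leg c = μ.arm c + 1 := by omega
        rwa [this] at hcond1
      · have : μ.zpos c.1 - μ.tone c.2 = ((μ.arm c + μ.leg c + 1 : ℕ) : ℤ) := by push_cast; omega
        rw [this] at hcond2
        exact_mod_cast hcond2
  calc μ.hooks α β = S.ncard := rfl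
    _ = ((fun c => (μ.zpos c.1, μ.tone c.2)) '' S).ncard := (Set.ncard_image_of_injOn hinj).symm
    _ = (Pset α β μ).ncard := by rw [himg]

section Counting

lemma card_dvd_Ioo (m A h : ℤ) (hm : 0 < m) (hh : 0 ≤ h) :
    ((Finset.Ioo A (A + m * h)).filter (fun z => m ∣ z)).card
      = if m ∣ A then (h - 1).toNat else h.toNat := by
  classical
  by_cases hA : m ∣ A
  · rw [if_pos hA]
    have himg : (Finset.Ioo A (A + m*h)).filter (fun z => m ∣ z)
        = (Finset.Ioo (0:ℤ) h).image (fun w => A + m * w) := by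
      ext z
      simp only [Finset.mem_filter, Finset.mem_Ioo, Finset.mem_image]
      constructor
      · rintro ⟨⟨h1, h2⟩, hz⟩
        obtain ⟨w, hw⟩ := dvd_sub hz hA
        refine ⟨w, ⟨?_, ?_⟩, by omega⟩
        · have : m * 0 < m * w := by omega
          exact lt_of_mul_lt_mul_left this hm.le
        · have : m * w < m * h := by omega
          exact lt_of_mul_lt_mul_left this hm.le
      · rintro ⟨w, ⟨hw1, hw2⟩, rfl⟩
        have l1 : m * 0 < m * w := (mul_lt_mul_iff_right₀ hm).2 hw1
        have l2 : m * w < m * h := (mul_lt_mul_iff_right₀ hm).2 hw2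
        exact ⟨⟨by omega, by omega⟩, Dvd.dvd.add hA ⟨w, rfl⟩⟩
    rw [himg, Finset.card_image_of_injective _ (fun a b hab => by
      have : m * a = m * b := by omega
      exact mul_left_cancel₀ (ne_of_gt hm) this), Int.card_Ioo]
    congr 1
    omega
  · rw [if_neg hA]
    set g := A / m with hg
    have hAe : m * g + A % m = A := Int.mul_ediv_add_emod A m
    have hρ1 : 0 ≤ A % m := Int.emod_nonneg A (ne_of_gt hm)
    have hρ2 : A % m < m := Int.emod_lt_of_pos A hm
    have hρ0 : A % m ≠ 0 := fun hc => hA (Int.dvd_of_emod_eq_zero hc)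
    have himg : (Finset.Ioo A (A + m*h)).filter (fun z => m ∣ z)
        = (Finset.Icc (g+1) (g+h)).image (fun w => m * w) := by
      ext z
      simp only [Finset.mem_filter, Finset.mem_Ioo, Finset.mem_image, Finset.mem_Icc]
      constructor
      · rintro ⟨⟨h1, h2⟩, w, rfl⟩
        refine ⟨w, ⟨?_, ?_⟩, rfl⟩
        · by_contra hc
          have : m * w ≤ m * g := (mul_le_mul_iff_right₀ hm).2 (by omega)
          omega
        · by_contra hc
          have : m * (g + h + 1) ≤ m * w := (mul_le_mul_iff_right₀ hm).2 (by omega)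
          have : m * (g + h + 1) = m * g + m * h + m := by ring
          omega
      · rintro ⟨w, ⟨hw1, hw2⟩, rfl⟩
        have l1 : m * (g+1) ≤ m * w := (mul_le_mul_iff_right₀ hm).2 hw1
        have l2 : m * w ≤ m * (g+h) := (mul_le_mul_iff_right₀ hm).2 hw2
        have e1 : m * (g+1) = m * g + m := by ring
        have e2 : m * (g+h) = m * g + m * h := by ring
        exact ⟨⟨by omega, by omega⟩, ⟨w, rfl⟩⟩
    rw [himg, Finset.card_image_of_injective _ (fun a b hab =>
      mul_left_cancel₀ (ne_of_gt hm) hab), Int.card_Icc]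
    congr 1
    omega

lemma card_res_Ioo (m x A h : ℤ) (hm : 0 < m) (hh : 0 ≤ h) :
    ((Finset.Ioo A (A + m * h)).filter (fun u => m ∣ u - x)).card
      = if m ∣ A - x then (h - 1).toNat else h.toNat := by
  classical
  have himg : (Finset.Ioo A (A + m*h)).filter (fun u => m ∣ u - x)
      = ((Finset.Ioo (A - x) (A - x + m*h)).filter (fun z => m ∣ z)).image (fun z => z + x) := by
    ext u
    simp only [Finset.mem_filter, Finset.mem_Ioo, Finset.mem_image]
    constructor
    · rintro ⟨⟨h1, h2⟩, hd⟩
      exact ⟨u - x, ⟨⟨by omega, by omega⟩, hd⟩, by omega⟩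
    · rintro ⟨z, ⟨⟨h1, h2⟩, hd⟩, rfl⟩
      exact ⟨⟨by omega, by omega⟩, by simpa using hd⟩
  rw [himg, Finset.card_image_of_injective _ (add_left_injective x),
    card_dvd_Ioo _ _ _ hm hh]

end Counting

namespace YPartition

lemma zcount_finite (μ : YPartition) (t' t : ℤ) :
    {u : ℤ | t' < u ∧ u < t ∧ edgeZero μ u}.Finite :=
  Set.Finite.subset (Set.finite_Ioo t' t) (fun u hu => ⟨hu.1, hu.2.1⟩)

lemma zcount_eq_zero_iff (μ : YPartition) (t' t : ℤ) :
    μ.zcount t' t = 0 ↔ ∀ u : ℤ, t' < u → u < t → ¬ edgeZero μ u := by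
  rw [zcount, Set.ncard_eq_zero (μ.zcount_finite t' t)]
  constructor
  · intro h u h1 h2 hz
    exact absurd h (Set.nonempty_iff_ne_empty.1 ⟨u, h1, h2, hz⟩)
  · intro h
    ext u
    simp only [Set.mem_setOf_eq, Set.mem_empty_iff_false, iff_false, not_and]
    exact fun h1 h2 => h u h1 h2

/-- the number of "pairs with no zeros in between" is the largest part -/
lemma ncard_legzero_pairs (μ : YPartition) :
    {p : ℤ × ℤ | p.2 < p.1 ∧ edgeZero μ p.1 ∧ ¬ edgeZero μ p.2 ∧
      μ.zcount p.2 p.1 = 0}.ncard = μ.parts 0 := by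
  classical
  have hG : (fun j : ℕ => (μ.zpos (μ.Zfun j - 1), μ.tone j)) '' (Set.Iio (μ.parts 0))
      = {p : ℤ × ℤ | p.2 < p.1 ∧ edgeZero μ p.1 ∧ ¬ edgeZero μ p.2 ∧
      μ.zcount p.2 p.1 = 0} := by
    ext p
    simp only [Set.mem_image, Set.mem_Iio, Set.mem_setOf_eq]
    constructor
    · rintro ⟨j, hj, rfl⟩
      have hZ : 0 < μ.Zfun j := by
        rcases Nat.eq_zero_or_pos (μ.Zfun j) with h | h
        · exact absurd (μ.parts_le_of_Zfun_le (j := j) (r := 0) (by omega)) (by omega)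
        · exact h
      have hZ1 : μ.Zfun j - 1 < μ.Zfun j := by omega
      refine ⟨(μ.tone_lt_zpos_iff j _).2 hZ1, ⟨_, rfl⟩, μ.not_edgeZero_tone j, ?_⟩
      rw [μ.zcount_eq_zero_iff]
      rintro u h1 h2 ⟨r, hr⟩
      have hr' : μ.zpos r = u := hr
      have hrZ : r < μ.Zfun j := (μ.tone_lt_zpos_iff j r).1 (by rw [hr']; exact h1)
      have : μ.zpos (μ.Zfun j - 1) ≤ μ.zpos r := by
        rcases eq_or_lt_of_le (show r ≤ μ.Zfun j - 1 by omega) with h | h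
        · rw [h]
        · exact le_of_lt (μ.zpos_strictAnti h)
      omega
    · rintro ⟨hlt, ⟨i, hi⟩, hnz, hcnt⟩
      obtain ⟨j, hj⟩ := μ.exists_tone_of_not_edgeZero hnz
      have hi' : μ.zpos i = p.1 := hi
      have hiZ : i < μ.Zfun j := (μ.tone_lt_zpos_iff j i).1 (by rw [hj, hi']; exact hlt)
      have hZi : μ.Zfun j ≤ i + 1 := by
        by_contra hc
        push_neg at hc
        have h1 : μ.tone j < μ.zpos (i+1) := (μ.tone_lt_zpos_iff j (i+1)).2 hc
        have h2 : μ.zpos (i+1) < μ.zpos i := μ.zpos_strictAnti (by omega)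
        rw [μ.zcount_eq_zero_iff] at hcnt
        exact hcnt (μ.zpos (i+1)) (hj ▸ h1) (hi' ▸ h2) ⟨i+1, rfl⟩
      have hZeq : μ.Zfun j = i + 1 := by omega
      refine ⟨j, ?_, ?_⟩
      · -- j < parts 0
        have h1 : j < μ.parts i := by
          have := hlt
          rw [← hj, ← hi'] at this
          simp only [tone, zpos, hZeq] at this
          push_cast at this
          omega
        exact lt_of_lt_of_le h1 (μ.antitone (Nat.zero_le i))
      · rw [hZeq]
        simp only [Nat.add_sub_cancel]
        rw [hi', hj]
  rw [← hG, Set.ncard_image_of_injOn (fun a ha b hb he => by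
    simp only [Prod.mk.injEq] at he
    exact μ.tone_strictMono.injective he.2)]
  rw [← Finset.coe_Iio, Set.ncard_coe_finset, Nat.card_Iio]

end YPartition

namespace YPartition
lemma zcount_eq_card_filter (μ : YPartition) (t' t : ℤ) [DecidablePred (edgeZero μ)] :
    μ.zcount t' t = ((Finset.Ioo t' t).filter (fun u => edgeZero μ u)).card := by
  rw [zcount, show {u : ℤ | t' < u ∧ u < t ∧ edgeZero μ u}
      = ↑((Finset.Ioo t' t).filter (fun u => edgeZero μ u)) from by
    ext u
    simp only [Set.mem_setOf_eq, Finset.coe_filter, Finset.mem_Ioo]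
    tauto, Set.ncard_coe_finset]
end YPartition

section FibHelpers

lemma int_fib_lt {m : ℕ} (hm : 0 < m) (u : ℤ) : (u % (m:ℤ)).toNat < m := by
  have h0 : ((m:ℤ)) ≠ 0 := by exact_mod_cast hm.ne'
  have h1 : 0 ≤ u % (m:ℤ) := Int.emod_nonneg u h0
  have h2 : u % (m:ℤ) < (m:ℤ) := Int.emod_lt_of_pos u (by exact_mod_cast hm)
  omega

lemma int_dvd_sub_fib {m : ℕ} (hm : 0 < m) (u : ℤ) :
    (m:ℤ) ∣ u - (((u % (m:ℤ)).toNat : ℕ) : ℤ) := by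
  have h0 : ((m:ℤ)) ≠ 0 := by exact_mod_cast hm.ne'
  have h1 : 0 ≤ u % (m:ℤ) := Int.emod_nonneg u h0
  have h2 : (((u % (m:ℤ)).toNat : ℕ) : ℤ) = u % (m:ℤ) := Int.toNat_of_nonneg h1
  rw [h2]
  exact ⟨u / (m:ℤ), by linarith [Int.mul_ediv_add_emod u (m:ℤ)]⟩

lemma fin_eq_of_dvd {m : ℕ} (r r' : Fin m) (h : (m:ℤ) ∣ ((r : ℕ) : ℤ) - ((r' : ℕ) : ℤ)) :
    r = r' := by
  have h1 := r.isLt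
  have h2 := r'.isLt
  have h3 : |((r : ℕ) : ℤ) - ((r' : ℕ) : ℤ)| < (m:ℤ) := by
    rw [abs_lt]
    constructor <;> [skip; skip] <;>
    · push_cast
      omega
  have := Int.eq_zero_of_abs_lt_dvd h h3
  have : (r : ℕ) = (r' : ℕ) := by omega
  exact Fin.ext this

end FibHelpers

section Central

/-- The central window computation. -/
lemma s17_central (m : ℕ) (hm : 2 ≤ m) (lam : YPartition)
    (q : Fin m → YPartition) (k : Fin m → ℤ)
    (hq : ∀ (j : Fin m) (t : ℤ),
      edgeZero (q j) t ↔ edgeZero lam ((m : ℤ) * (t + k j) + ((j : ℕ) : ℤ)))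
    (σ : Equiv.Perm (Fin m))
    (hσ : StrictMono fun l : Fin m => (m : ℤ) * k (σ l) + (((σ l : Fin m) : ℕ) : ℤ))
    (n : ℕ)
    (hn1 : ∀ i j : Fin m, i ≠ j → (q i).size + (q j).size ≤ n)
    (l : Fin m)
    (hl : ∀ r : Fin m, r ≠ l →
      ((m : ℤ) * n ≤ |((m : ℤ) * k (σ l) + (((σ l : Fin m) : ℕ) : ℤ)) -
        ((m : ℤ) * k (σ r) + (((σ r : Fin m) : ℕ) : ℤ))|))
    (j : Fin m) (t₀ t₁ : ℤ) (hlt : t₁ < t₀)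
    (hz : edgeZero (q j) t₀) (hnz : ¬ edgeZero (q j) t₁) :
    (((l : ℕ) + 1) * lam.zcount ((m:ℤ)*(t₁ + k j) + ((j:ℕ):ℤ)) ((m:ℤ)*(t₀ + k j) + ((j:ℕ):ℤ))
      = (m - ((l : ℕ) + 1)) *
        (((((m:ℤ)*(t₀ + k j) + ((j:ℕ):ℤ)) - ((m:ℤ)*(t₁ + k j) + ((j:ℕ):ℤ))).toNat)
          - lam.zcount ((m:ℤ)*(t₁ + k j) + ((j:ℕ):ℤ)) ((m:ℤ)*(t₀ + k j) + ((j:ℕ):ℤ))))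
    ↔ (j = σ l ∧ (q j).zcount t₁ t₀ = 0) := by
  classical
  have hm0 : 0 < m := by omega
  have hmz : (0:ℤ) < (m:ℤ) := by exact_mod_cast hm0
  set sf : Fin m → ℤ := fun r => (m : ℤ) * k r + ((r : ℕ) : ℤ) with hsf
  have hσ' : ∀ a b : Fin m, a < b → sf (σ a) < sf (σ b) := fun a b hab => hσ hab
  have hσiff : ∀ a b : Fin m, sf (σ a) < sf (σ b) ↔ a < b := fun a b => hσ.lt_iff_lt
  set t' : ℤ := (m:ℤ)*(t₁ + k j) + ((j:ℕ):ℤ) with ht'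
  set t : ℤ := (m:ℤ)*(t₀ + k j) + ((j:ℕ):ℤ) with ht
  set h : ℤ := t₀ - t₁ with hh
  have hh1 : 1 ≤ h := by omega
  set H : ℕ := h.toNat with hHdef
  have hH1 : 1 ≤ H := by omega
  have hHz : (H : ℤ) = h := Int.toNat_of_nonneg (by omega)
  have htt : t - t' = (m:ℤ) * h := by rw [ht, ht', hh]; ring
  set L : ℕ := lam.zcount t' t with hLdef
  -- the N r
  set N : Fin m → ℕ := fun r =>
    ((Finset.Ioo t' t).filter (fun u => edgeZero lam u ∧ (m:ℤ) ∣ u - ((r:ℕ):ℤ))).card with hN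
  have fib_lt : ∀ u : ℤ, (u % (m:ℤ)).toNat < m := int_fib_lt hm0
  set fib : ℤ → Fin m := fun u => ⟨(u % (m:ℤ)).toNat, fib_lt u⟩ with hfib
  have fib_eq : ∀ (u : ℤ) (r : Fin m), fib u = r ↔ (m:ℤ) ∣ u - ((r:ℕ):ℤ) := by
    intro u r
    constructor
    · rintro rfl
      exact int_dvd_sub_fib hm0 u
    · intro hd
      have h2 := int_dvd_sub_fib hm0 u
      refine fin_eq_of_dvd _ _ ?_
      have h4 := dvd_sub hd h2
      have h5 : (u - ((r:ℕ):ℤ)) - (u - (((fib u : Fin m):ℕ):ℤ))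
          = (((fib u : Fin m):ℕ):ℤ) - ((r:ℕ):ℤ) := by ring
      rwa [h5] at h4
  -- decomposition L = ∑ N r
  have hsum : L = ∑ r : Fin m, N r := by
    rw [hLdef, lam.zcount_eq_card_filter,
      Finset.card_eq_sum_card_fiberwise (f := fib) (t := Finset.univ)
        (fun x _ => Finset.mem_univ _)]
    refine Finset.sum_congr rfl (fun r _ => ?_)
    rw [hN, Finset.filter_filter]
    congr 1
    apply Finset.filter_congr
    intro u _
    rw [fib_eq]
  -- generic expansion of a residue-class element
  have hmem : ∀ (r : Fin m) (u : ℤ), (m:ℤ) ∣ u - ((r:ℕ):ℤ) →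
      ∃ v : ℤ, u = (m:ℤ)*(v + k r) + ((r:ℕ):ℤ) := by
    intro r u hd
    obtain ⟨w, hw⟩ := hd
    exact ⟨w - k r, by linarith⟩
  -- bounds transfer
  have hlow : ∀ (r : Fin m) (v : ℤ), t' < (m:ℤ)*(v + k r) + ((r:ℕ):ℤ) →
      (m:ℤ)*t₁ + sf j - sf r < (m:ℤ)*v := by
    intro r v hv
    have e1 : (m:ℤ)*(v + k r) + ((r:ℕ):ℤ) = (m:ℤ)*v + sf r := by rw [hsf]; ring
    have e2 : t' = (m:ℤ)*t₁ + sf j := by rw [ht', hsf]; ring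
    rw [e1, e2] at hv
    linarith
  have hhigh : ∀ (r : Fin m) (v : ℤ), (m:ℤ)*(v + k r) + ((r:ℕ):ℤ) < t →
      (m:ℤ)*v < (m:ℤ)*t₀ + sf j - sf r := by
    intro r v hv
    have e1 : (m:ℤ)*(v + k r) + ((r:ℕ):ℤ) = (m:ℤ)*v + sf r := by rw [hsf]; ring
    have e2 : t = (m:ℤ)*t₀ + sf j := by rw [ht, hsf]; ring
    rw [e1, e2] at hv
    linarith
  -- N j = quotient count
  have hNj : N j = (q j).zcount t₁ t₀ := by
    have himg : (Finset.Ioo t' t).filter (fun u => edgeZero lam u ∧ (m:ℤ) ∣ u - ((j:ℕ):ℤ))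
        = ((Finset.Ioo t₁ t₀).filter (fun v => edgeZero (q j) v)).image
            (fun v => (m:ℤ)*(v + k j) + ((j:ℕ):ℤ)) := by
      ext u
      simp only [Finset.mem_filter, Finset.mem_Ioo, Finset.mem_image]
      constructor
      · rintro ⟨⟨h1, h2⟩, he, hd⟩
        obtain ⟨v, hv⟩ := hmem j u hd
        subst hv
        refine ⟨v, ⟨⟨?_, ?_⟩, (hq j v).2 he⟩, rfl⟩
        · have := hlow j v h1
          have := lt_of_mul_lt_mul_left (show (m:ℤ)*t₁ < (m:ℤ)*v by linarith) hmz.le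
          linarith
        · have := hhigh j v h2
          have := lt_of_mul_lt_mul_left (show (m:ℤ)*v < (m:ℤ)*t₀ by linarith) hmz.le
          linarith
      · rintro ⟨v, ⟨⟨hv1, hv2⟩, hev⟩, rfl⟩
        refine ⟨⟨?_, ?_⟩, (hq j v).1 hev, ⟨v + k j, by ring⟩⟩
        · rw [ht']
          have := (mul_lt_mul_iff_right₀ hmz).2 (show t₁ + k j < v + k j by omega)
          omega
        · rw [ht]
          have := (mul_lt_mul_iff_right₀ hmz).2 (show v + k j < t₀ + k j by omega)
          omega
    rw [hN]
    simp only
    rw [himg, Finset.card_image_of_injective _ (fun a b hab => by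
        have : (m:ℤ)*(a + k j) = (m:ℤ)*(b + k j) := by omega
        have := mul_left_cancel₀ (ne_of_gt hmz) this
        omega),
      (q j).zcount_eq_card_filter]
  -- separated residues, low side: no zeros
  have hsep0 : ∀ r : Fin m, r ≠ j → (m:ℤ)*(n:ℤ) ≤ sf j - sf r → N r = 0 := by
    intro r hr hsep
    rw [hN]
    simp only
    rw [Finset.card_eq_zero, Finset.eq_empty_iff_forall_notMem]
    rintro u hu
    simp only [Finset.mem_filter, Finset.mem_Ioo] at hu
    obtain ⟨⟨h1, h2⟩, he, hd⟩ := hu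
    obtain ⟨v, hv⟩ := hmem r u hd
    subst hv
    have hev : edgeZero (q r) v := (hq r v).2 he
    have hb1 := hlow r v h1
    have hb2 : (m:ℤ)*(t₁ + (n:ℤ)) < (m:ℤ)*v := by
      have : (m:ℤ)*(t₁ + (n:ℤ)) = (m:ℤ)*t₁ + (m:ℤ)*(n:ℤ) := by ring
      linarith
    have hvlt : t₁ + (n:ℤ) < v := lt_of_mul_lt_mul_left hb2 hmz.le
    have hs1 : -(((q j).size : ℕ) : ℤ) ≤ t₁ := (q j).le_of_not_edgeZero hnz
    have hs2 : ((q j).size : ℕ) + ((q r).size : ℕ) ≤ n := hn1 j r (Ne.symm hr)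
    have hs3 : ((q r).parts 0 : ℤ) ≤ ((q r).size : ℤ) := by
      exact_mod_cast (q r).parts_zero_le_size
    refine (q r).not_edgeZero_of_le (t := v) ?_ hev
    have hs2' : (((q j).size : ℕ) : ℤ) + (((q r).size : ℕ) : ℤ) ≤ (n:ℤ) := by
      exact_mod_cast hs2
    linarith
  -- separated residues, high side: everything is a zero
  have hsepH : ∀ r : Fin m, r ≠ j → (m:ℤ)*(n:ℤ) ≤ sf r - sf j → N r = H := by
    intro r hr hsep
    have hfull : (Finset.Ioo t' t).filter (fun u => edgeZero lam u ∧ (m:ℤ) ∣ u - ((r:ℕ):ℤ))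
        = (Finset.Ioo t' t).filter (fun u => (m:ℤ) ∣ u - ((r:ℕ):ℤ)) := by
      ext u
      simp only [Finset.mem_filter, Finset.mem_Ioo]
      constructor
      · rintro ⟨hb, he, hd⟩
        exact ⟨hb, hd⟩
      · rintro ⟨⟨h1, h2⟩, hd⟩
        refine ⟨⟨h1, h2⟩, ?_, hd⟩
        obtain ⟨v, hv⟩ := hmem r u hd
        subst hv
        refine (hq r v).1 ((q r).edgeZero_of_lt ?_)
        have hb2 := hhigh r v h2
        have hb3 : (m:ℤ)*v < (m:ℤ)*(t₀ - (n:ℤ)) := by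
          have : (m:ℤ)*(t₀ - (n:ℤ)) = (m:ℤ)*t₀ - (m:ℤ)*(n:ℤ) := by ring
          linarith
        have hvlt : v < t₀ - (n:ℤ) := lt_of_mul_lt_mul_left hb3 hmz.le
        have hs1 : t₀ < (((q j).size : ℕ) : ℤ) := (q j).lt_of_edgeZero hz
        have hs2 : (((q j).size : ℕ) : ℤ) + (((q r).size : ℕ) : ℤ) ≤ (n:ℤ) := by
          exact_mod_cast hn1 j r (Ne.symm hr)
        linarith
    rw [hN]
    simp only
    rw [hfull]
    have hts : t = t' + (m:ℤ)*h := by omega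
    have hnotd : ¬ ((m:ℤ) ∣ t' - ((r:ℕ):ℤ)) := by
      intro hdvd
      apply hr
      refine fin_eq_of_dvd r j ?_
      have hd2 : (m:ℤ) ∣ t' - ((j:ℕ):ℤ) := ⟨t₁ + k j, by rw [ht']; ring⟩
      have hd3 := dvd_sub hd2 hdvd
      have e : (t' - ((j:ℕ):ℤ)) - (t' - ((r:ℕ):ℤ)) = ((r:ℕ):ℤ) - ((j:ℕ):ℤ) := by ring
      rwa [e] at hd3
    rw [hts, card_res_Ioo (m:ℤ) ((r:ℕ):ℤ) t' h hmz (by omega), if_neg hnotd]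
  -- upper bounds
  have hNle : ∀ r : Fin m, N r ≤ (if (m:ℤ) ∣ t' - ((r:ℕ):ℤ) then (h-1).toNat else H) := by
    intro r
    have hsub : (Finset.Ioo t' t).filter (fun u => edgeZero lam u ∧ (m:ℤ) ∣ u - ((r:ℕ):ℤ))
        ⊆ (Finset.Ioo t' t).filter (fun u => (m:ℤ) ∣ u - ((r:ℕ):ℤ)) := by
      intro u hu
      simp only [Finset.mem_filter] at hu ⊢
      exact ⟨hu.1, hu.2.2⟩
    have := Finset.card_le_card hsub
    rw [hN]
    simp only
    refine le_trans this ?_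
    have hts : t = t' + (m:ℤ)*h := by omega
    rw [hts, card_res_Ioo (m:ℤ) ((r:ℕ):ℤ) t' h hmz (by omega)]
  have hNjle : N j ≤ H - 1 := by
    have := hNle j
    rw [if_pos ⟨t₁ + k j, by rw [ht']; ring⟩] at this
    omega
  have hNle' : ∀ r : Fin m, N r ≤ H := by
    intro r
    refine le_trans (hNle r) ?_
    split <;> omega
  -- condition ↔ L = (m - 1 - l) * H
  have hLM : L ≤ m * H - 1 := by
    have h1 : L ≤ ((Finset.Ioo t' t)).card := by
      rw [hLdef, lam.zcount_eq_card_filter]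
      exact Finset.card_filter_le _ _
    rw [Int.card_Ioo] at h1
    have h2 : t - t' = ((m * H : ℕ) : ℤ) := by push_cast; rw [htt, hHz]
    have h3 : (t - t' - 1).toNat = m * H - 1 := by omega
    rw [h3] at h1
    exact h1
  have hMH : ((t - t').toNat : ℕ) = m * H := by
    have h2 : t - t' = ((m * H : ℕ) : ℤ) := by push_cast; rw [htt, hHz]
    rw [h2, Int.toNat_natCast]
  have hcond : (((l : ℕ) + 1) * L = (m - ((l : ℕ) + 1)) * ((t - t').toNat - L))
      ↔ L = (m - 1 - (l:ℕ)) * H := by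
    have hlm : (l:ℕ) < m := l.isLt
    rw [hMH]
    constructor
    · intro hc
      have hcz : ((l:ℕ) + 1 : ℤ) * (L:ℤ) = ((m:ℤ) - ((l:ℕ) + 1)) * ((m:ℤ) * H - L) := by
        have : ((m - ((l:ℕ)+1) : ℕ) : ℤ) = (m:ℤ) - ((l:ℕ)+1 : ℤ) := by push_cast; omega
        have h4 : ((m * H - L : ℕ) : ℤ) = (m:ℤ)*H - (L:ℤ) := by push_cast; omega
        calc ((l:ℕ) + 1 : ℤ) * (L:ℤ) = (((((l:ℕ)+1) * L : ℕ)) : ℤ) := by push_cast; ring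
          _ = (((m - ((l:ℕ)+1)) * (m * H - L) : ℕ) : ℤ) := by
              exact congrArg (fun x : ℕ => (x : ℤ)) hc
          _ = ((m:ℤ) - ((l:ℕ) + 1)) * ((m:ℤ) * H - L) := by push_cast [this, h4]; ring
      have hLz : (m:ℤ) * (L:ℤ) = (m:ℤ) * (((m:ℤ) - 1 - ((l:ℕ):ℤ)) * (H:ℤ)) := by
        linear_combination hcz
      have hcan := mul_left_cancel₀ (ne_of_gt hmz) hLz
      have e6 : (((m - 1 - (l:ℕ)) : ℕ) : ℤ) = (m:ℤ) - 1 - ((l:ℕ):ℤ) := by omega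
      have hfin : (L:ℤ) = (((m - 1 - (l:ℕ)) * H : ℕ) : ℤ) := by
        rw [hcan]
        push_cast
        rw [e6]
      exact_mod_cast hfin
    · intro hc
      rw [hc]
      have e1 : m * H - (m - 1 - (l:ℕ)) * H = ((l:ℕ) + 1) * H := by
        have : m = (m - 1 - (l:ℕ)) + ((l:ℕ) + 1) := by omega
        calc m * H - (m - 1 - (l:ℕ)) * H
            = ((m - 1 - (l:ℕ)) + ((l:ℕ) + 1)) * H - (m - 1 - (l:ℕ)) * H := by rw [← this]
          _ = ((l:ℕ) + 1) * H := by rw [Nat.add_mul]; omega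
      rw [e1]
      have : m - ((l:ℕ)+1) = m - 1 - (l:ℕ) := by omega
      rw [this]
      ring
  -- order helpers
  have hdist : ∀ r : Fin m, r ≠ σ l → (m:ℤ)*(n:ℤ) ≤ |sf (σ l) - sf r| := by
    intro r hr
    have h1 : σ.symm r ≠ l := by
      intro hc
      apply hr
      rw [← hc, Equiv.apply_symm_apply]
    have := hl (σ.symm r) h1
    rwa [Equiv.apply_symm_apply] at this
  have hne : ∀ r : Fin m, r ≠ σ l → sf r ≠ sf (σ l) := by
    intro r hr hc
    apply hr
    have h3 : σ.symm r = l := by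
      by_contra hne2
      rcases lt_or_gt_of_ne hne2 with hlt2 | hlt2
      · have h4 := hσ' _ _ hlt2
        rw [Equiv.apply_symm_apply] at h4
        omega
      · have h4 := hσ' _ _ hlt2
        rw [Equiv.apply_symm_apply] at h4
        omega
    rw [← h3, Equiv.apply_symm_apply]
  have hcard_gt : (Finset.univ.filter (fun r : Fin m => sf (σ l) < sf r)).card
      = m - 1 - (l:ℕ) := by
    have himg : Finset.univ.filter (fun r : Fin m => sf (σ l) < sf r)
        = Finset.image σ (Finset.Ioi l) := by
      ext r
      simp only [Finset.mem_filter, Finset.mem_univ, true_and, Finset.mem_image,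
        Finset.mem_Ioi]
      constructor
      · intro hr
        refine ⟨σ.symm r, ?_, by simp⟩
        have h2 : sf (σ l) < sf (σ (σ.symm r)) := by
          rwa [Equiv.apply_symm_apply]
        exact (hσiff l _).1 h2
      · rintro ⟨p', hp', rfl⟩
        exact hσ' l p' hp'
    rw [himg, Finset.card_image_of_injective _ σ.injective, Fin.card_Ioi]
  -- main computation when j = σ l
  have hmain : j = σ l → (∑ r : Fin m, N r) = N j + (m - 1 - (l:ℕ)) * H := by
    intro hj
    have hNr : ∀ r : Fin m, r ≠ j → N r = (if sf j < sf r then H else 0) := by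
      intro r hr
      have hrne : r ≠ σ l := by rwa [← hj]
      have hd := hdist r hrne
      rw [← hj] at hd
      rcases lt_trichotomy (sf r) (sf j) with hlt2 | heq | hgt
      · rw [if_neg (by omega)]
        apply hsep0 _ hr
        rw [abs_of_pos (by omega)] at hd
        linarith
      · exact absurd (hj ▸ heq) (hne r hrne)
      · rw [if_pos hgt]
        apply hsepH _ hr
        rw [abs_of_neg (by omega)] at hd
        linarith
    have hsplit : ∑ r : Fin m, N r = N j + ∑ r ∈ Finset.univ.erase j, N r :=
      (Finset.add_sum_erase _ _ (Finset.mem_univ j)).symm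
    have herase : ∑ r ∈ Finset.univ.erase j, N r = (m - 1 - (l:ℕ)) * H := by
      have h1 : ∑ r ∈ Finset.univ.erase j, N r
          = ∑ r ∈ Finset.univ.erase j, (if sf j < sf r then H else 0) :=
        Finset.sum_congr rfl (fun r hr => hNr r (Finset.ne_of_mem_erase hr))
      have h2 : ∑ r ∈ (Finset.univ.erase j).filter (fun r => sf j < sf r), H
          = ∑ r ∈ Finset.univ.erase j, (if sf j < sf r then H else 0) :=
        Finset.sum_filter _ _
      have h3 : (Finset.univ.erase j).filter (fun r => sf j < sf r)
          = Finset.univ.filter (fun r : Fin m => sf (σ l) < sf r) := by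
        rw [← hj]
        ext r
        simp only [Finset.mem_filter, Finset.mem_erase, Finset.mem_univ, true_and,
          and_true]
        constructor
        · rintro ⟨h4, h5⟩
          exact h5
        · intro h4
          refine ⟨?_, h4⟩
          intro hc2
          rw [hc2] at h4
          omega
      rw [h1, ← h2, h3, Finset.sum_const, smul_eq_mul, hcard_gt]
    rw [hsplit, herase]
  constructor
  · -- forward direction
    intro hc
    have hLeq : L = (m - 1 - (l:ℕ)) * H := hcond.1 hc
    rcases lt_trichotomy (σ.symm j) l with hp | hp | hp
    · -- p < l : contradiction
      exfalso
      have hjne : j ≠ σ l := by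
        intro hc2
        rw [hc2] at hp
        simp at hp
      have hsjl : sf j < sf (σ l) := by
        have h2 := hσ' (σ.symm j) l hp
        rwa [Equiv.apply_symm_apply] at h2
      have hNg : ∀ p' : Fin m, l ≤ p' → N (σ p') = H := by
        intro p' hp'
        have hr : σ p' ≠ j := by
          intro hc2
          have h5 : p' = σ.symm j := by rw [← hc2]; simp
          rw [h5] at hp'
          exact absurd hp' (not_le.2 hp)
        apply hsepH _ hr
        have h1 : sf (σ l) ≤ sf (σ p') := by
          rcases eq_or_lt_of_le hp' with h4 | h4
          · rw [h4]
          · exact le_of_lt (hσ' l p' h4)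
        have h2 := hdist j hjne
        rw [abs_of_pos (by omega)] at h2
        linarith
      have hge : (m - (l:ℕ)) * H ≤ ∑ r : Fin m, N r := by
        have h1 : ∑ r ∈ Finset.image σ (Finset.Ici l), N r ≤ ∑ r : Fin m, N r :=
          Finset.sum_le_sum_of_subset (Finset.subset_univ _)
        have h2 : ∑ r ∈ Finset.image σ (Finset.Ici l), N r
            = ∑ p' ∈ Finset.Ici l, N (σ p') :=
          Finset.sum_image (fun a _ b _ hab => σ.injective hab)
        have h3 : ∑ p' ∈ Finset.Ici l, N (σ p') = ∑ _p' ∈ Finset.Ici l, H :=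
          Finset.sum_congr rfl (fun p' hp' => hNg p' (Finset.mem_Ici.1 hp'))
        rw [h2, h3, Finset.sum_const, Fin.card_Ici, smul_eq_mul] at h1
        exact h1
      rw [← hsum, hLeq] at hge
      have e1 : (m - (l:ℕ)) * H = (m - 1 - (l:ℕ)) * H + H := by
        have e2 : m - (l:ℕ) = (m - 1 - (l:ℕ)) + 1 := by omega
        rw [e2, Nat.add_mul]
        omega
      omega
    · -- p = l : good case
      have hj : j = σ l := by rw [← hp]; simp
      have h1 := hmain hj
      rw [← hsum, hLeq] at h1
      have hNj0 : N j = 0 := by omega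
      rw [hNj] at hNj0
      exact ⟨hj, hNj0⟩
    · -- p > l : contradiction
      exfalso
      have hjne : j ≠ σ l := by
        intro hc2
        rw [hc2] at hp
        simp at hp
      have hsjl : sf (σ l) < sf j := by
        have h2 := hσ' l (σ.symm j) hp
        rwa [Equiv.apply_symm_apply] at h2
      have hN0 : ∀ p' : Fin m, p' ≤ l → N (σ p') = 0 := by
        intro p' hp'
        have hr : σ p' ≠ j := by
          intro hc2
          have h5 : p' = σ.symm j := by rw [← hc2]; simp
          rw [h5] at hp'
          exact absurd hp' (not_le.2 hp)
        apply hsep0 _ hr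
        have h1 : sf (σ p') ≤ sf (σ l) := by
          rcases eq_or_lt_of_le hp' with h4 | h4
          · rw [h4]
          · exact le_of_lt (hσ' p' l h4)
        have h2 := hdist j hjne
        rw [abs_of_neg (by omega)] at h2
        linarith
      set A : Finset (Fin m) := Finset.image σ (Finset.Iic l) with hA
      have hjA : j ∉ A := by
        rw [hA]
        simp only [Finset.mem_image, Finset.mem_Iic]
        rintro ⟨p', hp', hc2⟩
        have h5 : p' = σ.symm j := by rw [← hc2]; simp
        rw [h5] at hp'
        exact absurd hp' (not_le.2 hp)
      have hAcard : A.card = (l:ℕ) + 1 := by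
        rw [hA, Finset.card_image_of_injective _ σ.injective, Fin.card_Iic]
      have hsumA : ∑ r ∈ A, N r = 0 := by
        apply Finset.sum_eq_zero
        intro r hr
        rw [hA] at hr
        simp only [Finset.mem_image, Finset.mem_Iic] at hr
        obtain ⟨p', hp', rfl⟩ := hr
        exact hN0 p' hp'
      have htot : ∑ r ∈ A, N r + ∑ r ∈ Aᶜ, N r = ∑ r : Fin m, N r :=
        Finset.sum_add_sum_compl A N
      have hjAc : j ∈ Aᶜ := Finset.mem_compl.2 hjA
      have hsplit : N j + ∑ r ∈ Aᶜ.erase j, N r = ∑ r ∈ Aᶜ, N r :=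
        Finset.add_sum_erase _ _ hjAc
      have hbound : ∑ r ∈ Aᶜ.erase j, N r ≤ (Aᶜ.erase j).card * H := by
        have := Finset.sum_le_card_nsmul (Aᶜ.erase j) N H (fun r _ => hNle' r)
        rwa [smul_eq_mul] at this
      have hcAc : Aᶜ.card = m - ((l:ℕ) + 1) := by
        rw [Finset.card_compl, hAcard, Fintype.card_fin]
      have hcer : (Aᶜ.erase j).card = m - ((l:ℕ) + 1) - 1 := by
        rw [Finset.card_erase_of_mem hjAc, hcAc]
      have hlm2 : (l:ℕ) + 2 ≤ m := by
        have := hp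
        have h6 : (σ.symm j : ℕ) < m := (σ.symm j).isLt
        have h7 : (l:ℕ) < (σ.symm j : ℕ) := hp
        omega
      have hbound' : ∑ r ∈ Aᶜ.erase j, N r ≤ (m - ((l:ℕ) + 1) - 1) * H := by
        rw [← hcer]
        exact hbound
      have hLle : L ≤ (H - 1) + (m - ((l:ℕ) + 1) - 1) * H := by
        rw [hsum, ← htot, hsumA]
        omega
      rw [hLeq] at hLle
      have e1 : (m - 1 - (l:ℕ)) * H = (m - ((l:ℕ) + 1) - 1) * H + H := by
        have e2 : m - 1 - (l:ℕ) = (m - ((l:ℕ) + 1) - 1) + 1 := by omega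
        rw [e2, Nat.add_mul]
        omega
      omega
  · -- backward direction
    rintro ⟨hj, hq0⟩
    apply hcond.2
    have h1 := hmain hj
    rw [← hsum] at h1
    rw [h1, hNj, hq0]
    omega

end Central

/-- Here `q` is the `m`-quotient and `k` the `m`-shift of `lam`,
characterized by the edge-sequence relation `hq`; `σ` sorts the values
`s_j = m·k_j + j` increasingly; `n` is the maximum of `|λ^{(i)}| + |λ^{(j)}|` over
pairs `i ≠ j`; the element `l : Fin m` corresponds to the (1-based) position
`l + 1` in the sorted order. -/
theorem statement17 (m : ℕ) (hm : 2 ≤ m) (lam : YPartition)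
    (q : Fin m → YPartition) (k : Fin m → ℤ)
    (hq : ∀ (j : Fin m) (t : ℤ),
      edgeZero (q j) t ↔ edgeZero lam ((m : ℤ) * (t + k j) + ((j : ℕ) : ℤ)))
    (σ : Equiv.Perm (Fin m))
    (hσ : StrictMono fun l : Fin m => (m : ℤ) * k (σ l) + (((σ l : Fin m) : ℕ) : ℤ))
    (n : ℕ)
    (hn1 : ∀ i j : Fin m, i ≠ j → (q i).size + (q j).size ≤ n)
    (hn2 : ∃ i j : Fin m, i ≠ j ∧ (q i).size + (q j).size = n)
    (l : Fin m)
    (hl : ∀ r : Fin m, r ≠ l →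
      ((m : ℤ) * n ≤ |((m : ℤ) * k (σ l) + (((σ l : Fin m) : ℕ) : ℤ)) -
        ((m : ℤ) * k (σ r) + (((σ r : Fin m) : ℕ) : ℤ))|)) :
    YPartition.hooks ((l : ℕ) + 1) (m - ((l : ℕ) + 1)) lam = (q (σ l)).parts 0 := by
  classical
  have hm0 : 0 < m := by omega
  have hmz : (0:ℤ) < (m:ℤ) := by exact_mod_cast hm0
  have hcast : ((((l:ℕ) + 1 : ℕ)) : ℤ) + (((m - ((l:ℕ) + 1) : ℕ)) : ℤ) = (m:ℤ) := by
    have := l.isLt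
    omega
  rw [hooks_eq_ncard_Pset]
  have key : Pset ((l:ℕ)+1) (m - ((l:ℕ)+1)) lam
      = (fun p : ℤ × ℤ =>
          ((m:ℤ)*(p.1 + k (σ l)) + (((σ l : Fin m) : ℕ) : ℤ),
           (m:ℤ)*(p.2 + k (σ l)) + (((σ l : Fin m) : ℕ) : ℤ))) ''
        {p : ℤ × ℤ | p.2 < p.1 ∧ edgeZero (q (σ l)) p.1 ∧ ¬ edgeZero (q (σ l)) p.2 ∧
          (q (σ l)).zcount p.2 p.1 = 0} := by
    ext p
    simp only [Set.mem_image, Set.mem_setOf_eq, Pset]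
    constructor
    · rintro ⟨hlt, hz, hnz, hcnt, hdvd⟩
      have hdvd' : (m:ℤ) ∣ p.1 - p.2 := by rwa [hcast] at hdvd
      set j : Fin m := ⟨((p.1 % (m:ℤ)).toNat), int_fib_lt hm0 p.1⟩ with hjdef
      have hdj : (m:ℤ) ∣ p.1 - ((j:ℕ):ℤ) := int_dvd_sub_fib hm0 p.1
      obtain ⟨w, hw⟩ := hdj
      set t₀ : ℤ := w - k j with ht₀
      have hp1 : p.1 = (m:ℤ)*(t₀ + k j) + ((j:ℕ):ℤ) := by rw [ht₀]; linarith
      obtain ⟨d, hd⟩ := hdvd'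
      set t₁ : ℤ := t₀ - d with ht₁
      have hp2 : p.2 = (m:ℤ)*(t₁ + k j) + ((j:ℕ):ℤ) := by
        rw [ht₁]
        have : (m:ℤ)*(t₀ - d + k j) = (m:ℤ)*(t₀ + k j) - (m:ℤ)*d := by ring
        linarith
      have hd0 : 0 < d := by
        have h1 : (0:ℤ) < (m:ℤ)*d := by linarith
        have := lt_of_mul_lt_mul_left (show (m:ℤ)*0 < (m:ℤ)*d by linarith) hmz.le
        linarith
      have hlt' : t₁ < t₀ := by rw [ht₁]; omega
      have hz' : edgeZero (q j) t₀ := (hq j t₀).2 (by rw [← hp1]; exact hz)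
      have hnz' : ¬ edgeZero (q j) t₁ := fun hcon => hnz (by rw [hp2]; exact (hq j t₁).1 hcon)
      have hcen := s17_central m hm lam q k hq σ hσ n hn1 l hl j t₀ t₁ hlt' hz' hnz'
      rw [← hp1, ← hp2] at hcen
      obtain ⟨hjeq, hq0⟩ := hcen.1 hcnt
      rw [hjeq] at hp1 hp2 hz' hnz' hq0
      refine ⟨(t₀, t₁), ⟨hlt', hz', hnz', hq0⟩, ?_⟩
      rw [Prod.ext_iff]
      exact ⟨hp1.symm, hp2.symm⟩
    · rintro ⟨⟨t₀, t₁⟩, ⟨hlt, hz, hnz, hcnt⟩, rfl⟩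
      have hcen := s17_central m hm lam q k hq σ hσ n hn1 l hl (σ l) t₀ t₁ hlt hz hnz
      have hcnd := hcen.2 ⟨rfl, hcnt⟩
      refine ⟨?_, ?_, ?_, hcnd, ?_⟩
      · have := (mul_lt_mul_iff_right₀ hmz).2 (show t₁ + k (σ l) < t₀ + k (σ l) by omega)
        simp only
        omega
      · exact (hq (σ l) t₀).1 hz
      · intro hcon
        exact hnz ((hq (σ l) t₁).2 hcon)
      · rw [hcast]
        exact ⟨t₀ - t₁, by ring⟩
  have hinj : Set.InjOn (fun p : ℤ × ℤ =>
          ((m:ℤ)*(p.1 + k (σ l)) + (((σ l : Fin m) : ℕ) : ℤ),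
           (m:ℤ)*(p.2 + k (σ l)) + (((σ l : Fin m) : ℕ) : ℤ)))
      {p : ℤ × ℤ | p.2 < p.1 ∧ edgeZero (q (σ l)) p.1 ∧ ¬ edgeZero (q (σ l)) p.2 ∧
          (q (σ l)).zcount p.2 p.1 = 0} := by
    intro a _ b _ hab
    simp only [Prod.mk.injEq] at hab
    obtain ⟨h1, h2⟩ := hab
    have e1 : a.1 = b.1 := by
      have : (m:ℤ)*(a.1 + k (σ l)) = (m:ℤ)*(b.1 + k (σ l)) := by omega
      have := mul_left_cancel₀ (ne_of_gt hmz) this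
      omega
    have e2 : a.2 = b.2 := by
      have : (m:ℤ)*(a.2 + k (σ l)) = (m:ℤ)*(b.2 + k (σ l)) := by omega
      have := mul_left_cancel₀ (ne_of_gt hmz) this
      omega
    rw [Prod.ext_iff]
    exact ⟨e1, e2⟩
  rw [key, Set.ncard_image_of_injOn hinj, (q (σ l)).ncard_legzero_pairs]
end

section
/- Fix an integer m ≥ 2 and a partition μ. For k ∈ {0, 1, …, m−1}, let w_k(μ) = #{cells (i,j) of μ : i − j ≡ k (mod m)}, let A_k(μ) be the number of addable k-cells of μ (cells (i,j) not in μ with i − j ≡ k (mod m) such that adding (i,j) to the Young diagram of μ again gives the Young diagram of a partition), and let R_k(μ) be the number of removable k-cells of μ (cells (i,j) of μ with i − j ≡ k (mod m) whose removal from the Young diagram of μ again gives the Young diagram of a partition). Then, with indices read modulo m, A_k(μ) − R_k(μ) = w_{k+1}(μ) + w_{k−1}(μ) − 2·w_k(μ) + χ(k = 0) as integers. Moreover, if μ is an m-core, then for each k at least one of A_k(μ) and R_k(μ) is zero. -/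
open Polynomial

/-- `w_v(μ)`: the number of cells `(i,j)` (1-indexed) with `i - j ≡ v (mod m)`. -/
noncomputable def wcount (m : ℕ) (μ : YPartition) (v : ℤ) : ℕ :=
  {c ∈ μ.cells | Int.ModEq (m : ℤ) ((c.1 : ℤ) - (c.2 : ℤ)) v}.ncard

/-- The number of addable `v`-cells: cells not in `μ` with label `≡ v (mod m)` whose
addition again yields the Young diagram of a partition. -/
noncomputable def addableCount (m : ℕ) (μ : YPartition) (v : ℤ) : ℕ :=
  {c : ℕ × ℕ | c ∉ μ.cells ∧ Int.ModEq (m : ℤ) ((c.1 : ℤ) - (c.2 : ℤ)) v ∧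
    ∃ ν : YPartition, ν.cells = insert c μ.cells}.ncard

/-- The number of removable `v`-cells: cells of `μ` with label `≡ v (mod m)` whose
removal again yields the Young diagram of a partition. -/
noncomputable def removableCount (m : ℕ) (μ : YPartition) (v : ℤ) : ℕ :=
  {c : ℕ × ℕ | c ∈ μ.cells ∧ Int.ModEq (m : ℤ) ((c.1 : ℤ) - (c.2 : ℤ)) v ∧
    ∃ ν : YPartition, ν.cells = μ.cells \ {c}}.ncard

/-- An `m`-core: no cell has hook length equal to `m`. -/
def IsMCore (m : ℕ) (μ : YPartition) : Prop :=
  ∀ c ∈ μ.cells, μ.arm c + μ.leg c + 1 ≠ m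

namespace Stmt18

open Finset

/-- A finite downward-closed set of naturals equals an initial segment. -/
lemma mem_iff_lt_ncard {S : Set ℕ} (hfin : S.Finite)
    (hdc : ∀ ⦃a b : ℕ⦄, a ≤ b → b ∈ S → a ∈ S) (x : ℕ) :
    x ∈ S ↔ x < S.ncard := by
  constructor
  · intro hx
    have h1 : Set.Iic x ⊆ S := fun a ha => hdc ha hx
    have h2 := Set.ncard_le_ncard h1 hfin
    have h3 : (Set.Iic x).ncard = x + 1 := by
      rw [← Finset.coe_Iic, Set.ncard_coe_finset, Nat.card_Iic]
    omega
  · intro hx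
    by_contra hxS
    have h1 : S ⊆ Set.Iio x := by
      intro b hb
      by_contra hbx
      exact hxS (hdc (not_lt.mp hbx) hb)
    have h2 := Set.ncard_le_ncard h1 (Set.finite_Iio x)
    have h3 : (Set.Iio x).ncard = x := by
      rw [← Finset.coe_range, Set.ncard_coe_finset, Finset.card_range]
    omega

variable (μ : YPartition)

lemma exists_bound : ∃ N : ℕ, ∀ i, N ≤ i → μ.parts i = 0 := by
  obtain ⟨N, hN⟩ := (μ.finite_support.bddAbove)
  refine ⟨N + 1, fun i hi => ?_⟩
  by_contra h
  have : i ∈ Function.support μ.parts := h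
  have := hN this
  omega

/-- Number of cells in column `j` (0-indexed). -/
noncomputable def colcard (j : ℕ) : ℕ := {r : ℕ | j < μ.parts r}.ncard

lemma colset_finite (j : ℕ) : {r : ℕ | j < μ.parts r}.Finite :=
  μ.finite_support.subset (fun r hr => by
    simp only [Set.mem_setOf_eq] at hr
    simp only [Function.mem_support]
    omega)

lemma lt_parts_iff (j r : ℕ) : j < μ.parts r ↔ r < colcard μ j := by
  have := mem_iff_lt_ncard (colset_finite μ j)
    (fun a b hab hb => lt_of_lt_of_le hb (μ.antitone hab)) r
  simpa [colcard] using this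

lemma leg_eq {i j : ℕ} (h : j < μ.parts i) :
    μ.leg (i, j) + (i + 1) = colcard μ j := by
  have hi : i < colcard μ j := (lt_parts_iff μ j i).mp h
  have hset : {r : ℕ | (i, j).1 < r ∧ (i, j).2 < μ.parts r} = Set.Ioo i (colcard μ j) := by
    ext r
    simp only [Set.mem_setOf_eq, Set.mem_Ioo]
    exact and_congr_right (fun _ => lt_parts_iff μ j r)
  rw [YPartition.leg, hset, ← Finset.coe_Ioo, Set.ncard_coe_finset, Nat.card_Ioo]
  omega

/-- The beta-set of a partition: the set of integers `parts i - i`. -/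
def SS : Set ℤ := {t | ∃ i : ℕ, (μ.parts i : ℤ) - i = t}

lemma s_strictAnti : StrictAnti (fun i : ℕ => (μ.parts i : ℤ) - i) := by
  intro a b hab
  have h1 : μ.parts b ≤ μ.parts a := μ.antitone (le_of_lt hab)
  simp only
  have : (μ.parts b : ℤ) ≤ μ.parts a := by exact_mod_cast h1
  omega

lemma not_SS (j : ℕ) : ((j : ℤ) + 1 - colcard μ j) ∉ SS μ := by
  rintro ⟨r, hr⟩
  by_cases hlt : r < colcard μ j
  · -- then parts r > j, so parts r - r ≥ j + 1 - r ≥ j + 1 - (colcard - 1)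
    have h1 : j < μ.parts r := (lt_parts_iff μ j r).mpr hlt
    have : (j : ℤ) + 1 ≤ μ.parts r := by exact_mod_cast h1
    have : (r : ℤ) < colcard μ j := by exact_mod_cast hlt
    omega
  · have h1 : ¬ j < μ.parts r := fun h => hlt ((lt_parts_iff μ j r).mp h)
    have : (μ.parts r : ℤ) ≤ j := by
      have := not_lt.mp h1; exact_mod_cast this
    have : (colcard μ j : ℤ) ≤ r := by
      have := not_lt.mp hlt; exact_mod_cast this
    omega

lemma hook_eq {i j : ℕ} (h : j < μ.parts i) :
    ((μ.arm (i, j) + μ.leg (i, j) + 1 : ℕ) : ℤ) =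
      ((μ.parts i : ℤ) - i) - ((j : ℤ) + 1 - colcard μ j) := by
  have hleg := leg_eq μ h
  have harm : μ.arm (i, j) + (j + 1) = μ.parts i := by
    simp only [YPartition.arm]
    omega
  have hleg' : (μ.leg (i,j) : ℤ) + (i + 1) = colcard μ j := by exact_mod_cast hleg
  have harm' : (μ.arm (i,j) : ℤ) + (j + 1) = μ.parts i := by exact_mod_cast harm
  push_cast
  omega

end Stmt18
namespace Stmt18

open Finset

variable (μ : YPartition)

lemma exists_cell_of_pair {t : ℤ} (ht : t ∉ SS μ) {i : ℕ}
    (hlt : t < (μ.parts i : ℤ) - i) :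
    ∃ j : ℕ, j < μ.parts i ∧
      ((μ.arm (i, j) + μ.leg (i, j) + 1 : ℕ) : ℤ) = ((μ.parts i : ℤ) - i) - t := by
  classical
  set E : Set ℕ := {r : ℕ | t < (μ.parts r : ℤ) - r} with hE
  have hEfin : E.Finite := by
    have hsub : E ⊆ Function.support μ.parts ∪ Set.Iio (max 0 (-t)).toNat := by
      intro r hr
      simp only [hE, Set.mem_setOf_eq] at hr
      by_cases h0 : μ.parts r = 0
      · right
        simp only [Set.mem_Iio]
        rw [h0] at hr
        push_cast at hr ⊢
        omega
      · left; exact h0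
    exact (μ.finite_support.union (Set.finite_Iio _)).subset hsub
  have hEdc : ∀ ⦃a b : ℕ⦄, a ≤ b → b ∈ E → a ∈ E := by
    intro a b hab hb
    simp only [hE, Set.mem_setOf_eq] at hb ⊢
    have h1 : μ.parts b ≤ μ.parts a := μ.antitone hab
    have : (μ.parts b : ℤ) ≤ μ.parts a := by exact_mod_cast h1
    have : (a : ℤ) ≤ b := by exact_mod_cast hab
    omega
  set e : ℕ := E.ncard with he
  have hmem : ∀ r : ℕ, r ∈ E ↔ r < e := mem_iff_lt_ncard hEfin hEdc
  have hiE : i ∈ E := hlt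
  have hie : i < e := (hmem i).mp hiE
  -- j as an integer is t + e - 1; show it's nonnegative
  have hj0 : 0 ≤ t + e - 1 := by
    by_cases htpos : 1 ≤ t
    · omega
    · -- t ≤ 0; show (-t).toNat ∈ E
      have hr0 : (-t).toNat ∈ E := by
        simp only [hE, Set.mem_setOf_eq]
        have hr0c : ((-t).toNat : ℤ) = -t := Int.toNat_of_nonneg (by omega)
        rcases Nat.eq_zero_or_pos (μ.parts (-t).toNat) with h0 | h0
        · -- equality would put t in SS
          rw [h0]
          push_cast
          rw [hr0c]
          rcases lt_or_eq_of_le (by omega : t ≤ 0 - -t) with h | h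
          · omega
          · exfalso
            exact ht ⟨(-t).toNat, by rw [h0, hr0c]; push_cast; omega⟩
        · have : (1 : ℤ) ≤ μ.parts (-t).toNat := by exact_mod_cast h0
          rw [hr0c]; omega
      have := (hmem _).mp hr0
      have hr0c : ((-t).toNat : ℤ) = -t := Int.toNat_of_nonneg (by omega)
      have : ((-t).toNat : ℤ) < e := by exact_mod_cast this
      omega
  set j : ℕ := (t + e - 1).toNat with hjdef
  have hjc : (j : ℤ) = t + e - 1 := Int.toNat_of_nonneg hj0
  -- key: j < parts r ↔ r < e
  have hkey : ∀ r : ℕ, j < μ.parts r ↔ r < e := by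
    intro r
    constructor
    · intro h
      by_contra hre
      have hre' : e ≤ r := not_lt.mp hre
      -- e ∉ E and parts e - e ≠ t
      have heE : e ∉ E := fun hc => by have := (hmem e).mp hc; omega
      have h1 : (μ.parts e : ℤ) - e ≤ t := not_lt.mp heE
      have h2 : (μ.parts e : ℤ) - e ≠ t := fun hc => ht ⟨e, hc⟩
      have h3 : (μ.parts e : ℤ) ≤ t + e - 1 := by omega
      have h4 : μ.parts r ≤ μ.parts e := μ.antitone hre'
      have h5 : (μ.parts r : ℤ) ≤ μ.parts e := by exact_mod_cast h4
      have h6 : (j : ℤ) < μ.parts r := by exact_mod_cast h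
      omega
    · intro hre
      have hgood : e - 1 ∈ E := (hmem _).mpr (by omega)
      have h1 : t < (μ.parts (e-1) : ℤ) - ((e-1 : ℕ) : ℤ) := hgood
      have h2 : μ.parts (e-1) ≤ μ.parts r := μ.antitone (by omega)
      have h2' : (μ.parts (e-1) : ℤ) ≤ μ.parts r := by exact_mod_cast h2
      have h3 : ((e - 1 : ℕ) : ℤ) = (e : ℤ) - 1 := by
        have h4 : 1 ≤ e := by omega
        push_cast [h4]
        ring
      have : (j : ℤ) < μ.parts r := by omega
      exact_mod_cast this
  have hcol : colcard μ j = e := by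
    have hset : {r : ℕ | j < μ.parts r} = Set.Iio e := by
      ext r; simp only [Set.mem_setOf_eq, Set.mem_Iio]; exact hkey r
    rw [colcard, hset, ← Finset.coe_range, Set.ncard_coe_finset, Finset.card_range]
  have hcell : j < μ.parts i := (hkey i).mpr hie
  refine ⟨j, hcell, ?_⟩
  rw [hook_eq μ hcell, hcol, hjc]
  ring

/-- If the beta-set has a gap of size `d*m`, it has a gap of size `m`. -/
lemma ladder (m : ℕ) : ∀ d : ℕ, ∀ t : ℤ, t ∉ SS μ → (t + m * d) ∈ SS μ →
    ∃ t' : ℤ, t' ∉ SS μ ∧ (t' + m) ∈ SS μ := by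
  intro d
  induction d with
  | zero => intro t ht hts; simp at hts; exact absurd hts ht
  | succ d ih =>
    intro t ht hts
    by_cases h : (t + m) ∈ SS μ
    · exact ⟨t, ht, h⟩
    · refine ih (t + m) h ?_
      have : t + m + m * d = t + m * (d + 1) := by ring
      rw [this]
      exact_mod_cast hts

lemma core_no_gap {m : ℕ} (hm : 0 < m) (hcore : IsMCore m μ) :
    ∀ t : ℤ, t ∉ SS μ → (t + m) ∉ SS μ := by
  intro t ht hts
  obtain ⟨i, hi⟩ := hts
  have hlt : t < (μ.parts i : ℤ) - i := by
    have : (0 : ℤ) < m := by exact_mod_cast hm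
    omega
  obtain ⟨j, hj, hhook⟩ := exists_cell_of_pair μ ht hlt
  have : ((μ.arm (i,j) + μ.leg (i,j) + 1 : ℕ) : ℤ) = m := by rw [hhook, hi]; ring
  have heq : μ.arm (i,j) + μ.leg (i,j) + 1 = m := by exact_mod_cast this
  exact hcore (i, j) hj heq

lemma core_no_mul_gap {m : ℕ} (hm : 0 < m) (hcore : IsMCore m μ)
    {u w : ℤ} (hu : u ∉ SS μ) (hw : w ∈ SS μ) (hlt : u < w) (hdvd : (m : ℤ) ∣ w - u) :
    False := by
  obtain ⟨d, hd⟩ := hdvd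
  have hd0 : 0 ≤ d := by
    have : (0:ℤ) < m := by exact_mod_cast hm
    nlinarith
  obtain ⟨t', ht', hts'⟩ := ladder μ m d.toNat u hu (by
    have : (d.toNat : ℤ) = d := Int.toNat_of_nonneg hd0
    rw [this, ← hd]
    simpa using hw)
  exact core_no_gap μ hm hcore t' ht' hts'

end Stmt18
namespace Stmt18

variable (μ : YPartition)

lemma nat_eq_of_forall_lt {a b : ℕ} (h : ∀ s, s < a ↔ s < b) : a = b := by
  have h1 := h a
  have h2 := h b
  omega

lemma mem_cells_iff (p : ℕ × ℕ) : p ∈ μ.cells ↔ p.2 < μ.parts p.1 := Iff.rfl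

lemma addable_iff (p : ℕ × ℕ) :
    (p ∉ μ.cells ∧ ∃ ν : YPartition, ν.cells = insert p μ.cells) ↔
    (p.2 = μ.parts p.1 ∧ (p.1 = 0 ∨ μ.parts p.1 < μ.parts (p.1 - 1))) := by
  obtain ⟨i, j⟩ := p
  simp only [mem_cells_iff]
  constructor
  · rintro ⟨hnot, ν, hν⟩
    have hmem : ∀ r s : ℕ, s < ν.parts r ↔ ((r, s) = (i, j) ∨ s < μ.parts r) := by
      intro r s
      have : (r, s) ∈ ν.cells ↔ (r, s) ∈ insert (i,j) μ.cells := by rw [hν]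
      simpa [mem_cells_iff, Set.mem_insert_iff] using this
    have hji : μ.parts i ≤ j := not_lt.mp hnot
    -- j = parts i
    have hj : j = μ.parts i := by
      by_contra hne
      have hlt : μ.parts i < j := by omega
      have h1 : j < ν.parts i := by
        rw [hmem i j]; left; rfl
      have h2 := (hmem i (μ.parts i)).mp (by omega)
      simp only [Prod.mk.injEq] at h2
      omega
    subst hj
    refine ⟨rfl, ?_⟩
    -- ν.parts i = parts i + 1, ν.parts r = parts r for r ≠ i
    have hνi : ν.parts i = μ.parts i + 1 := by
      apply nat_eq_of_forall_lt
      intro s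
      rw [hmem i s]
      simp only [Prod.mk.injEq, true_and]
      omega
    rcases Nat.eq_zero_or_pos i with h0 | h0
    · left; exact h0
    · right
      have hνi1 : ν.parts (i - 1) = μ.parts (i - 1) := by
        apply nat_eq_of_forall_lt
        intro s
        rw [hmem (i-1) s]
        simp only [Prod.mk.injEq]
        constructor
        · rintro (⟨h1, h2⟩ | h); · omega
          · exact h
        · intro h; right; exact h
      have := ν.antitone (show i - 1 ≤ i by omega)
      omega
  · rintro ⟨hj, hcond⟩
    subst hj
    constructor
    · omega
    · refine ⟨⟨Function.update μ.parts i (μ.parts i + 1), ?_, ?_⟩, ?_⟩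
      · intro a b hab
        rw [Function.update_apply, Function.update_apply]
        by_cases hb : b = i <;> by_cases ha : a = i
        · simp [hb, ha]
        · rw [if_pos hb, if_neg ha]
          subst hb
          have ha' : a < b := by omega
          rcases hcond with h0 | h0
          · omega
          · have : μ.parts (b-1) ≤ μ.parts a := μ.antitone (by omega)
            omega
        · rw [if_neg hb, if_pos ha]
          subst ha
          have : μ.parts b ≤ μ.parts a := μ.antitone hab
          omega
        · rw [if_neg hb, if_neg ha]
          exact μ.antitone hab
      · apply (μ.finite_support.union (Set.finite_singleton i)).subset
        intro r hr
        simp only [Function.mem_support] at hr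
        rw [Function.update_apply] at hr
        by_cases h : r = i
        · right; exact h
        · left
          rw [if_neg h] at hr
          exact hr
      · ext ⟨r, s⟩
        simp only [mem_cells_iff, Set.mem_insert_iff, Prod.mk.injEq]
        by_cases h : r = i
        · subst h
          simp only [Function.update_self, true_and]
          omega
        · simp only [Function.update_of_ne h, h, false_and, false_or]
  
lemma removable_iff (p : ℕ × ℕ) :
    (p ∈ μ.cells ∧ ∃ ν : YPartition, ν.cells = μ.cells \ {p}) ↔
    (p.2 + 1 = μ.parts p.1 ∧ μ.parts (p.1 + 1) < μ.parts p.1) := by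
  obtain ⟨i, j⟩ := p
  simp only [mem_cells_iff]
  constructor
  · rintro ⟨hin, ν, hν⟩
    have hmem : ∀ r s : ℕ, s < ν.parts r ↔ (s < μ.parts r ∧ ¬((r, s) = (i, j))) := by
      intro r s
      have : (r, s) ∈ ν.cells ↔ (r, s) ∈ μ.cells \ {(i,j)} := by rw [hν]
      simpa [mem_cells_iff, Set.mem_diff] using this
    have hj : j + 1 = μ.parts i := by
      by_contra hne
      have hlt : j + 1 < μ.parts i := by omega
      have h1 : μ.parts i - 1 < ν.parts i := by
        rw [hmem]
        simp only [Prod.mk.injEq, true_and]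
        omega
      have h2 : ¬ (j < ν.parts i) := by
        rw [hmem]
        simp
      omega
    refine ⟨hj, ?_⟩
    have hνi : ν.parts i = μ.parts i - 1 := by
      apply nat_eq_of_forall_lt
      intro s
      rw [hmem i s]
      simp only [Prod.mk.injEq, true_and]
      omega
    have hνi1 : ν.parts (i + 1) = μ.parts (i + 1) := by
      apply nat_eq_of_forall_lt
      intro s
      rw [hmem (i+1) s]
      simp only [Prod.mk.injEq]
      constructor
      · rintro ⟨h, _⟩; exact h
      · intro h; exact ⟨h, by omega⟩
    have := ν.antitone (show i ≤ i + 1 by omega)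
    omega
  · rintro ⟨hj, hcond⟩
    constructor
    · omega
    · refine ⟨⟨Function.update μ.parts i (μ.parts i - 1), ?_, ?_⟩, ?_⟩
      · intro a b hab
        rw [Function.update_apply, Function.update_apply]
        by_cases hb : b = i <;> by_cases ha : a = i
        · simp [hb, ha]
        · simp only [if_pos hb, if_neg ha]
          subst hb
          have : μ.parts b ≤ μ.parts a := μ.antitone hab
          omega
        · simp only [if_neg hb, if_pos ha]
          subst ha
          have hb' : a + 1 ≤ b := by omega
          have : μ.parts b ≤ μ.parts (a+1) := μ.antitone hb'
          omega
        · simp only [if_neg hb, if_neg ha]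
          exact μ.antitone hab
      · apply μ.finite_support.subset
        intro r hr
        simp only [Function.mem_support] at hr
        rw [Function.update_apply] at hr
        simp only [Function.mem_support]
        by_cases h : r = i
        · subst h
          rw [if_pos rfl] at hr
          omega
        · rw [if_neg h] at hr
          exact hr
      · ext ⟨r, s⟩
        simp only [mem_cells_iff, Set.mem_diff, Set.mem_singleton_iff, Prod.mk.injEq]
        by_cases h : r = i
        · subst h
          simp only [Function.update_self, true_and]
          omega
        · simp only [Function.update_of_ne h, h, false_and, not_false_iff, and_true]

end Stmt18
namespace Stmt18

open Finset

open Classical in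
/-- Integer indicator of a proposition. -/
noncomputable def chi (P : Prop) : ℤ := if P then 1 else 0

lemma chi_pos {P : Prop} (h : P) : chi P = 1 := by simp [chi, h]

lemma chi_neg {P : Prop} (h : ¬ P) : chi P = 0 := by simp [chi, h]

lemma chi_congr {P Q : Prop} (h : P ↔ Q) : chi P = chi Q := by
  by_cases hP : P
  · rw [chi_pos hP, chi_pos (h.mp hP)]
  · rw [chi_neg hP, chi_neg (fun hq => hP (h.mpr hq))]

lemma ite_eq_chi (P : Prop) [Decidable P] : (if P then (1:ℤ) else 0) = chi P := by
  by_cases h : P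
  · rw [if_pos h, chi_pos h]
  · rw [if_neg h, chi_neg h]

variable (μ : YPartition)

lemma wcount_eq (m : ℕ) (v : ℤ) {N : ℕ} (hN : ∀ i, N ≤ i → μ.parts i = 0) :
    (wcount m μ v : ℤ) =
      ∑ i ∈ range N, ∑ j ∈ range (μ.parts i),
        chi ((i : ℤ) - (j : ℤ) ≡ v [ZMOD (m : ℤ)]) := by
  classical
  set M := μ.parts 0 with hM
  set F : Finset (ℕ × ℕ) := (range N ×ˢ range M).filter
    (fun p => p.2 < μ.parts p.1 ∧ ((p.1 : ℤ) - (p.2 : ℤ) ≡ v [ZMOD (m : ℤ)])) with hF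
  have hset : {c ∈ μ.cells | Int.ModEq (m : ℤ) ((c.1 : ℤ) - (c.2 : ℤ)) v} = ↑F := by
    ext ⟨i, j⟩
    simp only [hF, Set.mem_setOf_eq, Finset.coe_filter, Finset.mem_product,
      Finset.mem_range, mem_cells_iff]
    constructor
    · rintro ⟨h1, h2⟩
      refine ⟨⟨?_, ?_⟩, h1, h2⟩
      · by_contra h
        have := hN i (by omega)
        omega
      · have := μ.antitone (Nat.zero_le i)
        omega
    · rintro ⟨_, h1, h2⟩
      exact ⟨h1, h2⟩
  rw [wcount, hset, Set.ncard_coe_finset, hF, Finset.card_filter]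
  rw [Finset.sum_product]
  push_cast
  refine Finset.sum_congr rfl (fun i _ => ?_)
  -- inner sums
  rw [show ∑ j ∈ range M, (if j < μ.parts i ∧ ((i:ℤ) - j ≡ v [ZMOD (m:ℤ)]) then (1:ℤ) else 0)
      = ∑ j ∈ range M, chi (j < μ.parts i ∧ ((i:ℤ) - j ≡ v [ZMOD (m:ℤ)]))
    from Finset.sum_congr rfl (fun j _ => ite_eq_chi _)]
  have hsub : range (μ.parts i) ⊆ range M := by
    intro j hj
    simp only [Finset.mem_range] at hj ⊢
    have := μ.antitone (Nat.zero_le i)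
    omega
  rw [← Finset.sum_subset hsub (fun j _ hj => by
    simp only [Finset.mem_range, not_lt] at hj
    exact chi_neg (fun h => by omega))]
  refine Finset.sum_congr rfl (fun j hj => ?_)
  simp only [Finset.mem_range] at hj
  exact chi_congr (by tauto)

lemma addableCount_eq (m : ℕ) (v : ℤ) {N : ℕ} (hN : ∀ i, N ≤ i → μ.parts i = 0) :
    (addableCount m μ v : ℤ) =
      ∑ i ∈ range (N + 1),
        chi (((i : ℤ) - (μ.parts i : ℤ) ≡ v [ZMOD (m : ℤ)]) ∧
          (i = 0 ∨ μ.parts i < μ.parts (i - 1))) := by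
  classical
  set T : Set ℕ := {i | ((i : ℤ) - (μ.parts i : ℤ) ≡ v [ZMOD (m : ℤ)]) ∧
      (i = 0 ∨ μ.parts i < μ.parts (i - 1))} with hT
  have himg : {c : ℕ × ℕ | c ∉ μ.cells ∧ Int.ModEq (m : ℤ) ((c.1 : ℤ) - (c.2 : ℤ)) v ∧
      ∃ ν : YPartition, ν.cells = insert c μ.cells} = (fun i => (i, μ.parts i)) '' T := by
    ext p
    simp only [Set.mem_setOf_eq, Set.mem_image, hT]
    constructor
    · rintro ⟨h1, h2, h3⟩
      have := (addable_iff μ p).mp ⟨h1, h3⟩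
      refine ⟨p.1, ⟨?_, this.2⟩, ?_⟩
      · rw [← this.1]; exact h2
      · rw [← this.1]
    · rintro ⟨i, ⟨h2, hcond⟩, hp⟩
      subst hp
      have := (addable_iff μ (i, μ.parts i)).mpr ⟨rfl, hcond⟩
      exact ⟨this.1, h2, this.2⟩
  have hinj : Function.Injective (fun i : ℕ => (i, μ.parts i)) := by
    intro a b h
    simpa using congrArg Prod.fst h
  have hTfin : T = ↑((range (N + 1)).filter (fun i : ℕ =>
      ((i : ℤ) - (μ.parts i : ℤ) ≡ v [ZMOD (m : ℤ)]) ∧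
      (i = 0 ∨ μ.parts i < μ.parts (i - 1)))) := by
    ext i
    simp only [hT, Set.mem_setOf_eq, Finset.coe_filter, Finset.mem_range]
    constructor
    · rintro ⟨h1, h2⟩
      refine ⟨?_, h1, h2⟩
      by_contra h
      rcases h2 with h0 | h0
      · omega
      · have e1 := hN i (by omega)
        have e2 := hN (i - 1) (by omega)
        omega
    · rintro ⟨_, h1, h2⟩
      exact ⟨h1, h2⟩
  rw [addableCount, himg, Set.ncard_image_of_injective _ hinj, hTfin,
    Set.ncard_coe_finset, Finset.card_filter]
  push_cast
  exact Finset.sum_congr rfl (fun i _ => ite_eq_chi _)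

lemma removableCount_eq (m : ℕ) (v : ℤ) {N : ℕ} (hN : ∀ i, N ≤ i → μ.parts i = 0) :
    (removableCount m μ v : ℤ) =
      ∑ i ∈ range N,
        chi (((i : ℤ) - (μ.parts i : ℤ) + 1 ≡ v [ZMOD (m : ℤ)]) ∧
          μ.parts (i + 1) < μ.parts i) := by
  classical
  set T : Set ℕ := {i | ((i : ℤ) - (μ.parts i : ℤ) + 1 ≡ v [ZMOD (m : ℤ)]) ∧
      μ.parts (i + 1) < μ.parts i} with hT
  have himg : {c : ℕ × ℕ | c ∈ μ.cells ∧ Int.ModEq (m : ℤ) ((c.1 : ℤ) - (c.2 : ℤ)) v ∧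
      ∃ ν : YPartition, ν.cells = μ.cells \ {c}} = (fun i => (i, μ.parts i - 1)) '' T := by
    ext p
    simp only [Set.mem_setOf_eq, Set.mem_image, hT]
    constructor
    · rintro ⟨h1, h2, h3⟩
      have hch := (removable_iff μ p).mp ⟨h1, h3⟩
      have hp2 : p.2 = μ.parts p.1 - 1 := by omega
      refine ⟨p.1, ⟨?_, hch.2⟩, ?_⟩
      · have : ((p.2 : ℤ)) = (μ.parts p.1 : ℤ) - 1 := by omega
        have h2' : ((p.1 : ℤ) - ((μ.parts p.1 : ℤ) - 1) ≡ v [ZMOD (m:ℤ)]) := by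
          rwa [this] at h2
        have : (p.1 : ℤ) - ((μ.parts p.1 : ℤ) - 1) = (p.1:ℤ) - μ.parts p.1 + 1 := by ring
        rwa [this] at h2'
      · rw [← hp2]
    · rintro ⟨i, ⟨h2, hcond⟩, hp⟩
      subst hp
      have hpos : 0 < μ.parts i := by omega
      have hch := (removable_iff μ (i, μ.parts i - 1)).mpr
        ⟨show μ.parts i - 1 + 1 = μ.parts i by omega, hcond⟩
      refine ⟨hch.1, ?_, hch.2⟩
      have hcast : ((μ.parts i - 1 : ℕ) : ℤ) = (μ.parts i : ℤ) - 1 := by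
        push_cast [hpos]; ring
      show ((i:ℤ) - ((μ.parts i - 1 : ℕ) : ℤ) ≡ v [ZMOD (m:ℤ)])
      rw [hcast]
      have : (i : ℤ) - ((μ.parts i : ℤ) - 1) = (i:ℤ) - μ.parts i + 1 := by ring
      rw [this]
      exact h2
  have hinj : Function.Injective (fun i : ℕ => (i, μ.parts i - 1)) := by
    intro a b h
    simpa using congrArg Prod.fst h
  have hTfin : T = ↑((range N).filter (fun i : ℕ =>
      ((i : ℤ) - (μ.parts i : ℤ) + 1 ≡ v [ZMOD (m : ℤ)]) ∧
      μ.parts (i + 1) < μ.parts i)) := by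
    ext i
    simp only [hT, Set.mem_setOf_eq, Finset.coe_filter, Finset.mem_range]
    constructor
    · rintro ⟨h1, h2⟩
      refine ⟨?_, h1, h2⟩
      by_contra h
      have e1 := hN i (by omega)
      omega
    · rintro ⟨_, h1, h2⟩
      exact ⟨h1, h2⟩
  rw [removableCount, himg, Set.ncard_image_of_injective _ hinj, hTfin,
    Set.ncard_coe_finset, Finset.card_filter]
  push_cast
  exact Finset.sum_congr rfl (fun i _ => ite_eq_chi _)

end Stmt18
namespace Stmt18

open Finset

lemma chi_mod_congr (m : ℕ) (v : ℤ) {a b : ℤ} (h : a = b) :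
    chi (a ≡ v [ZMOD (m : ℤ)]) = chi (b ≡ v [ZMOD (m : ℤ)]) := by rw [h]

lemma row_id (m : ℕ) (v x : ℤ) : ∀ L : ℕ,
    (∑ j ∈ range L, chi (x - (j : ℤ) ≡ v + 1 [ZMOD (m : ℤ)])) +
      (∑ j ∈ range L, chi (x - (j : ℤ) ≡ v - 1 [ZMOD (m : ℤ)])) -
      2 * (∑ j ∈ range L, chi (x - (j : ℤ) ≡ v [ZMOD (m : ℤ)])) =
    chi (x - (L : ℤ) ≡ v [ZMOD (m : ℤ)]) - chi (x ≡ v [ZMOD (m : ℤ)]) +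
      chi (x + 1 ≡ v [ZMOD (m : ℤ)]) - chi (x + 1 - (L : ℤ) ≡ v [ZMOD (m : ℤ)]) := by
  intro L
  induction L with
  | zero => simp
  | succ L ih =>
    rw [sum_range_succ, sum_range_succ, sum_range_succ]
    have e1 : chi (x - (L : ℤ) ≡ v + 1 [ZMOD (m : ℤ)]) =
        chi (x - (L : ℤ) - 1 ≡ v [ZMOD (m : ℤ)]) := by
      refine chi_congr ⟨fun h => ?_, fun h => ?_⟩
      · simpa using h.sub_right 1
      · simpa using h.add_right 1
    have e2 : chi (x - (L : ℤ) ≡ v - 1 [ZMOD (m : ℤ)]) =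
        chi (x + 1 - (L : ℤ) ≡ v [ZMOD (m : ℤ)]) := by
      refine chi_congr ⟨fun h => ?_, fun h => ?_⟩
      · have := h.add_right 1
        simpa [sub_add_cancel] using (by ring_nf at this ⊢; exact this : _)
      · have := h.sub_right 1
        simpa using (by ring_nf at this ⊢; exact this : _)
    have e3 : chi (x - ((L : ℤ) + 1) ≡ v [ZMOD (m : ℤ)]) =
        chi (x - (L : ℤ) - 1 ≡ v [ZMOD (m : ℤ)]) := chi_mod_congr m v (by ring)
    have e4 : chi (x + 1 - ((L : ℤ) + 1) ≡ v [ZMOD (m : ℤ)]) =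
        chi (x - (L : ℤ) ≡ v [ZMOD (m : ℤ)]) := chi_mod_congr m v (by ring)
    push_cast
    push_cast at ih
    rw [e1, e2, e3, e4]
    linarith [ih]

lemma AR_id (μ : YPartition) (m : ℕ) (v : ℤ) : ∀ K : ℕ,
    (∑ i ∈ range (K + 1),
        chi (((i : ℤ) - (μ.parts i : ℤ) ≡ v [ZMOD (m : ℤ)]) ∧
          (i = 0 ∨ μ.parts i < μ.parts (i - 1)))) -
      (∑ i ∈ range K,
        chi (((i : ℤ) - (μ.parts i : ℤ) + 1 ≡ v [ZMOD (m : ℤ)]) ∧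
          μ.parts (i + 1) < μ.parts i)) =
    (∑ i ∈ range K,
        (chi ((i : ℤ) - (μ.parts i : ℤ) ≡ v [ZMOD (m : ℤ)]) -
          chi ((i : ℤ) + 1 - (μ.parts i : ℤ) ≡ v [ZMOD (m : ℤ)]))) +
      chi ((K : ℤ) - (μ.parts K : ℤ) ≡ v [ZMOD (m : ℤ)]) := by
  intro K
  induction K with
  | zero =>
    simp only [range_one, sum_singleton, range_zero, sum_empty, sub_zero, zero_add]
    refine chi_congr ?_
    constructor
    · rintro ⟨h, _⟩
      simpa using h
    · intro h
      exact ⟨by simpa using h, by simp⟩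
  | succ K ih =>
    simp only [sum_range_succ]
    have key : chi ((((K+1 : ℕ) : ℤ) - (μ.parts (K+1) : ℤ) ≡ v [ZMOD (m : ℤ)]) ∧
          (K + 1 = 0 ∨ μ.parts (K+1) < μ.parts (K + 1 - 1))) -
        chi ((((K : ℕ) : ℤ) - (μ.parts K : ℤ) + 1 ≡ v [ZMOD (m : ℤ)]) ∧
          μ.parts (K + 1) < μ.parts K) =
        chi (((K+1 : ℕ) : ℤ) - (μ.parts (K+1) : ℤ) ≡ v [ZMOD (m : ℤ)]) -
        chi (((K : ℕ) : ℤ) + 1 - (μ.parts K : ℤ) ≡ v [ZMOD (m : ℤ)]) := by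
      by_cases h : μ.parts (K + 1) = μ.parts K
      · have hz1 : chi ((((K+1 : ℕ) : ℤ) - (μ.parts (K+1) : ℤ) ≡ v [ZMOD (m : ℤ)]) ∧
            (K + 1 = 0 ∨ μ.parts (K+1) < μ.parts (K + 1 - 1))) = 0 := by
          apply chi_neg
          rintro ⟨_, h0 | h0⟩
          · omega
          · simp only [Nat.add_sub_cancel] at h0
            omega
        have hz2 : chi ((((K : ℕ) : ℤ) - (μ.parts K : ℤ) + 1 ≡ v [ZMOD (m : ℤ)]) ∧
            μ.parts (K + 1) < μ.parts K) = 0 := chi_neg (fun hc => by omega)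
        have hz3 : chi (((K+1 : ℕ) : ℤ) - (μ.parts (K+1) : ℤ) ≡ v [ZMOD (m : ℤ)]) =
            chi (((K : ℕ) : ℤ) + 1 - (μ.parts K : ℤ) ≡ v [ZMOD (m : ℤ)]) :=
          chi_mod_congr m v (by rw [h]; push_cast; ring)
        rw [hz1, hz2, hz3]
        ring
      · have hlt : μ.parts (K + 1) < μ.parts K := by
          have := μ.antitone (show K ≤ K + 1 by omega)
          omega
        have hz1 : chi ((((K+1 : ℕ) : ℤ) - (μ.parts (K+1) : ℤ) ≡ v [ZMOD (m : ℤ)]) ∧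
            (K + 1 = 0 ∨ μ.parts (K+1) < μ.parts (K + 1 - 1))) =
            chi (((K+1 : ℕ) : ℤ) - (μ.parts (K+1) : ℤ) ≡ v [ZMOD (m : ℤ)]) := by
          apply chi_congr
          constructor
          · rintro ⟨h1, _⟩; exact h1
          · intro h1
            refine ⟨h1, Or.inr ?_⟩
            simpa using hlt
        have hz2 : chi ((((K : ℕ) : ℤ) - (μ.parts K : ℤ) + 1 ≡ v [ZMOD (m : ℤ)]) ∧
            μ.parts (K + 1) < μ.parts K) =
            chi (((K : ℕ) : ℤ) + 1 - (μ.parts K : ℤ) ≡ v [ZMOD (m : ℤ)]) := by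
          apply chi_congr
          constructor
          · rintro ⟨h1, _⟩
            have : ((K : ℕ) : ℤ) - (μ.parts K : ℤ) + 1 = ((K : ℕ) : ℤ) + 1 - (μ.parts K : ℤ) := by
              ring
            rwa [this] at h1
          · intro h1
            refine ⟨?_, hlt⟩
            have : ((K : ℕ) : ℤ) - (μ.parts K : ℤ) + 1 = ((K : ℕ) : ℤ) + 1 - (μ.parts K : ℤ) := by
              ring
            rwa [this]
        rw [hz1, hz2]
    have hK1 : (((K+1 : ℕ)) : ℤ) = (K : ℤ) + 1 := by push_cast; ring
    rw [hK1] at key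
    simp only [sum_range_succ] at ih
    push_cast at key ih ⊢
    linarith [ih, key]

end Stmt18
namespace Stmt18

open Finset

lemma Wsum_id (μ : YPartition) (m : ℕ) (v : ℤ) : ∀ N : ℕ,
    (∑ i ∈ range N, ∑ j ∈ range (μ.parts i), chi ((i : ℤ) - (j : ℤ) ≡ v + 1 [ZMOD (m : ℤ)])) +
      (∑ i ∈ range N, ∑ j ∈ range (μ.parts i), chi ((i : ℤ) - (j : ℤ) ≡ v - 1 [ZMOD (m : ℤ)])) -
      2 * (∑ i ∈ range N, ∑ j ∈ range (μ.parts i), chi ((i : ℤ) - (j : ℤ) ≡ v [ZMOD (m : ℤ)])) =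
    (∑ i ∈ range N,
        (chi ((i : ℤ) - (μ.parts i : ℤ) ≡ v [ZMOD (m : ℤ)]) -
          chi ((i : ℤ) + 1 - (μ.parts i : ℤ) ≡ v [ZMOD (m : ℤ)]))) +
      chi ((N : ℤ) ≡ v [ZMOD (m : ℤ)]) - chi ((0 : ℤ) ≡ v [ZMOD (m : ℤ)]) := by
  intro N
  induction N with
  | zero => simp
  | succ N ih =>
    simp only [sum_range_succ]
    have hrow := row_id m v (N : ℤ) (μ.parts N)
    have hc1 : chi (((N + 1 : ℕ) : ℤ) ≡ v [ZMOD (m : ℤ)]) =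
        chi ((N : ℤ) + 1 ≡ v [ZMOD (m : ℤ)]) := chi_mod_congr m v (by push_cast; ring)
    push_cast at hc1 ⊢
    linarith [ih, hrow, hc1.le, hc1.ge]

end Stmt18

open Stmt18 Finset in
theorem statement18 (m : ℕ) (hm : 2 ≤ m) (μ : YPartition) :
    (∀ k : ℕ, k < m →
      (addableCount m μ (k : ℤ) : ℤ) - (removableCount m μ (k : ℤ) : ℤ) =
        (wcount m μ ((k : ℤ) + 1) : ℤ) + (wcount m μ ((k : ℤ) - 1) : ℤ) -
          2 * (wcount m μ (k : ℤ) : ℤ) + (if k = 0 then 1 else 0)) ∧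
    (IsMCore m μ → ∀ k : ℕ, k < m →
      addableCount m μ (k : ℤ) = 0 ∨ removableCount m μ (k : ℤ) = 0) := by
  obtain ⟨N, hN⟩ := exists_bound μ
  constructor
  · -- Part 1
    intro k hk
    have hA := addableCount_eq μ m (k : ℤ) hN
    have hR := removableCount_eq μ m (k : ℤ) hN
    have hW1 := wcount_eq μ m ((k : ℤ) + 1) hN
    have hW2 := wcount_eq μ m ((k : ℤ) - 1) hN
    have hW0 := wcount_eq μ m (k : ℤ) hN
    have hAR := AR_id μ m (k : ℤ) N
    have hWs := Wsum_id μ m (k : ℤ) N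
    have hcN : μ.parts N = 0 := hN N le_rfl
    have hchiN : chi ((N : ℤ) - (μ.parts N : ℤ) ≡ (k : ℤ) [ZMOD (m : ℤ)]) =
        chi ((N : ℤ) ≡ (k : ℤ) [ZMOD (m : ℤ)]) :=
      chi_mod_congr m (k : ℤ) (by rw [hcN]; push_cast; ring)
    rw [hchiN] at hAR
    have hchi0 : chi ((0 : ℤ) ≡ (k : ℤ) [ZMOD (m : ℤ)]) = (if k = 0 then (1 : ℤ) else 0) := by
      rw [ite_eq_chi]
      apply chi_congr
      constructor
      · intro h
        have hdvd : (m : ℤ) ∣ (k : ℤ) - 0 := Int.ModEq.dvd h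
        have hdvd' : (m : ℤ) ∣ (k : ℤ) := by simpa using hdvd
        have : m ∣ k := Int.natCast_dvd_natCast.mp hdvd'
        exact Nat.eq_zero_of_dvd_of_lt this hk
      · rintro rfl
        rfl
    rw [hchi0] at hWs
    linarith [hA, hR, hAR, hW1, hW2, hW0, hWs]
  · -- Part 2
    intro hcore k hk
    by_contra hboth
    push_neg at hboth
    obtain ⟨hA, hR⟩ := hboth
    have hm0 : 0 < m := by omega
    -- extract an addable cell
    obtain ⟨p, hp⟩ := Set.nonempty_of_ncard_ne_zero hA
    obtain ⟨hp1, hp2, hp3⟩ := hp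
    have hadd := (addable_iff μ p).mp ⟨hp1, hp3⟩
    set i := p.1 with hi
    have hmodA : ((i : ℤ) - (μ.parts i : ℤ) ≡ (k : ℤ) [ZMOD (m : ℤ)]) := by
      have := hp2
      rw [hadd.1] at this
      exact this
    -- extract a removable cell
    obtain ⟨q, hq⟩ := Set.nonempty_of_ncard_ne_zero hR
    obtain ⟨hq1, hq2, hq3⟩ := hq
    have hrem := (removable_iff μ q).mp ⟨hq1, hq3⟩
    set r := q.1 with hr
    have hq2' : (q.2 : ℤ) = (μ.parts r : ℤ) - 1 := by
      have := hrem.1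
      push_cast [← this]
      ring
    have hmodR : ((r : ℤ) - (μ.parts r : ℤ) + 1 ≡ (k : ℤ) [ZMOD (m : ℤ)]) := by
      have h := hq2
      rw [show ((q.1 : ℤ) - (q.2 : ℤ)) = (r : ℤ) - (μ.parts r : ℤ) + 1 by
        rw [← hr, hq2']; ring] at h
      exact h
    -- beta-set facts
    set sI : ℤ := (μ.parts i : ℤ) - i with hsI
    set sR : ℤ := (μ.parts r : ℤ) - r with hsR
    have hsImem : sI ∈ SS μ := ⟨i, rfl⟩
    have hsRmem : sR ∈ SS μ := ⟨r, rfl⟩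
    have hsIgap : sI + 1 ∉ SS μ := by
      rintro ⟨j', hj'⟩
      have hlt : sI < (μ.parts j' : ℤ) - j' := by omega
      have hji : j' < i := by
        by_contra hcon
        have := (s_strictAnti μ).antitone (not_lt.mp hcon : i ≤ j')
        omega
      rcases hadd.2 with h0 | h0
      · omega
      · have h1 : j' ≤ i - 1 := by omega
        have h2 := (s_strictAnti μ).antitone h1
        have h3 : ((i - 1 : ℕ) : ℤ) = (i : ℤ) - 1 := by
          have : 1 ≤ i := by omega
          push_cast [this]; ring
        rw [h3] at h2
        have h4 : (μ.parts i : ℤ) < μ.parts (i - 1) := by exact_mod_cast h0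
        omega
    have hsRgap : sR - 1 ∉ SS μ := by
      rintro ⟨j', hj'⟩
      have hjr : r < j' := by
        by_contra hcon
        have := (s_strictAnti μ).antitone (not_lt.mp hcon : j' ≤ r)
        omega
      have h1 : r + 1 ≤ j' := by omega
      have h2 := (s_strictAnti μ).antitone h1
      have h4 : (μ.parts (r + 1) : ℤ) < μ.parts r := by exact_mod_cast hrem.2
      push_cast at h2
      omega
    -- divisibility between the two labels
    have hdvd : (m : ℤ) ∣ (sR - 1) - sI := by
      have hd := Int.ModEq.dvd (hmodA.trans hmodR.symm)
      have heq : ((r : ℤ) - (μ.parts r : ℤ) + 1) - ((i : ℤ) - (μ.parts i : ℤ)) =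
          -((sR - 1) - sI) := by rw [hsI, hsR]; ring
      rw [heq] at hd
      exact dvd_neg.mp hd
    rcases lt_trichotomy (sR - 1) sI with hlt | heq | hgt
    · exact core_no_mul_gap μ hm0 hcore hsRgap hsImem hlt (by
        have : sI - (sR - 1) = -((sR - 1) - sI) := by ring
        rw [this]
        exact hdvd.neg_right)
    · exact hsRgap (heq ▸ hsImem)
    · refine core_no_mul_gap μ hm0 hcore hsIgap hsRmem (by omega) ?_
      have : sR - (sI + 1) = (sR - 1) - sI := by ring
      rw [this]
      exact hdvd
end
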